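/- arXiv:2011.12726 — 4 statements merged into one kernel-verified Lean document; each statement's English description precedes it below -/
import Mathlib

section
/- Let G be the discrete-time LTI system with matrices (A, B, C, D) where A is Schur–Cohn stable, and for N ∈ ℕ let D̂_N be the N-th order lifted feedthrough matrix. Then the sequence N ↦ ‖D̂_N‖_{2+} is monotonically non-decreasing, and lim_{N→∞} ‖D̂_N‖_{2+} = ‖G‖_{2+}. -/
open Matrix

noncomputable section

/-- A symmetric matrix is copositive if its quadratic form is nonnegative on the
nonnegative orthant. -/
def Copositive {q : Type*} [Fintype q] (Q : Matrix q q ℝ) : Prop :=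
  Q.IsSymm ∧ ∀ x : q → ℝ, (∀ i, 0 ≤ x i) → 0 ≤ x ⬝ᵥ Q.mulVec x

/-- The matrix L(A,B,C,D,P,Q,γ). -/
def Lmat {n w z : Type*} [Fintype n] [Fintype w] [Fintype z]
    [DecidableEq n] [DecidableEq w] [DecidableEq z]
    (A : Matrix n n ℝ) (B : Matrix n w ℝ) (C : Matrix z n ℝ) (D : Matrix z w ℝ)
    (P : Matrix n n ℝ) (Q : Matrix w w ℝ) (γ : ℝ) : Matrix (n ⊕ w) (n ⊕ w) ℝ :=
  Matrix.fromBlocks (-P) 0 0 ((-(γ ^ 2)) • (1 : Matrix w w ℝ) + Q)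
    + (Matrix.fromBlocks A B C D)ᵀ * Matrix.fromBlocks P 0 0 (1 : Matrix z z ℝ)
      * Matrix.fromBlocks A B C D

/-- State of the LTI system x(k+1) = A x(k) + B w(k), x(0) = 0. -/
def ltiState {n w : Type*} [Fintype n] [Fintype w]
    (A : Matrix n n ℝ) (B : Matrix n w ℝ) (ws : ℕ → w → ℝ) : ℕ → n → ℝ
  | 0 => 0
  | k + 1 => A.mulVec (ltiState A B ws k) + B.mulVec (ws k)

/-- Output z(k) = C x(k) + D w(k). -/
def ltiOutput {n w z : Type*} [Fintype n] [Fintype w] [Fintype z]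
    (A : Matrix n n ℝ) (B : Matrix n w ℝ) (C : Matrix z n ℝ) (D : Matrix z w ℝ)
    (ws : ℕ → w → ℝ) (k : ℕ) : z → ℝ :=
  C.mulVec (ltiState A B ws k) + D.mulVec (ws k)

/-- l2 norm of a discrete-time signal. -/
def sigNorm {w : Type*} [Fintype w] (u : ℕ → w → ℝ) : ℝ :=
  Real.sqrt (∑' k, ∑ i, (u k i) ^ 2)

/-- Euclidean norm of a vector. -/
def vecNorm {ι : Type*} [Fintype ι] (v : ι → ℝ) : ℝ :=
  Real.sqrt (∑ i, (v i) ^ 2)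

/-- The positive l2 induced norm of the system (A,B,C,D). -/
def posL2Gain {n w z : Type*} [Fintype n] [Fintype w] [Fintype z]
    (A : Matrix n n ℝ) (B : Matrix n w ℝ) (C : Matrix z n ℝ) (D : Matrix z w ℝ) : ℝ :=
  sSup {c : ℝ | ∃ ws : ℕ → w → ℝ, (∀ k i, 0 ≤ ws k i) ∧
    Summable (fun k => ∑ i, (ws k i) ^ 2) ∧ sigNorm ws = 1 ∧
    c = sigNorm (ltiOutput A B C D ws)}

/-- The l2 induced norm of the system (A,B,C,D). -/
def l2Gain {n w z : Type*} [Fintype n] [Fintype w] [Fintype z]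
    (A : Matrix n n ℝ) (B : Matrix n w ℝ) (C : Matrix z n ℝ) (D : Matrix z w ℝ) : ℝ :=
  sSup {c : ℝ | ∃ ws : ℕ → w → ℝ,
    Summable (fun k => ∑ i, (ws k i) ^ 2) ∧ sigNorm ws = 1 ∧
    c = sigNorm (ltiOutput A B C D ws)}

/-- Schur–Cohn stability: the spectral radius (over ℂ) is < 1. -/
def SchurStable {n : Type*} [Fintype n] [DecidableEq n] (A : Matrix n n ℝ) : Prop :=
  spectralRadius ℂ (A.map (algebraMap ℝ ℂ)) < 1

/-- Lifted A matrix. -/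
def liftA {n : Type*} [Fintype n] [DecidableEq n] (A : Matrix n n ℝ) (N : ℕ) :
    Matrix n n ℝ := A ^ N

/-- Lifted B matrix. -/
def liftB {n w : Type*} [Fintype n] [DecidableEq n]
    (A : Matrix n n ℝ) (B : Matrix n w ℝ) (N : ℕ) : Matrix n (Fin N × w) ℝ :=
  Matrix.of fun r c => (A ^ (N - 1 - (c.1 : ℕ)) * B) r c.2

/-- Lifted C matrix. -/
def liftC {n z : Type*} [Fintype n] [DecidableEq n]
    (A : Matrix n n ℝ) (C : Matrix z n ℝ) (N : ℕ) : Matrix (Fin N × z) n ℝ :=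
  Matrix.of fun r c => (C * A ^ (r.1 : ℕ)) r.2 c

/-- Lifted D matrix. -/
def liftD {n w z : Type*} [Fintype n] [DecidableEq n]
    (A : Matrix n n ℝ) (B : Matrix n w ℝ) (C : Matrix z n ℝ) (D : Matrix z w ℝ)
    (N : ℕ) : Matrix (Fin N × z) (Fin N × w) ℝ :=
  Matrix.of fun r c =>
    if (r.1 : ℕ) = (c.1 : ℕ) then D r.2 c.2
    else if (c.1 : ℕ) < (r.1 : ℕ) then (C * A ^ ((r.1 : ℕ) - (c.1 : ℕ) - 1) * B) r.2 c.2
    else 0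

/-- ReLU. -/
def relu {ι : Type*} (ξ : ι → ℝ) : ι → ℝ := fun i => max (ξ i) 0

/-- Positive maximal singular value. -/
def matPosNorm {ι κ : Type*} [Fintype ι] [Fintype κ] (M : Matrix ι κ ℝ) : ℝ :=
  sSup {c : ℝ | ∃ v : κ → ℝ, (∀ i, 0 ≤ v i) ∧ vecNorm v = 1 ∧ c = vecNorm (M.mulVec v)}

/-- Maximal singular value (spectral norm). -/
def matNorm {ι κ : Type*} [Fintype ι] [Fintype κ] (M : Matrix ι κ ℝ) : ℝ :=
  sSup {c : ℝ | ∃ v : κ → ℝ, vecNorm v = 1 ∧ c = vecNorm (M.mulVec v)}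



open Finset Filter
open scoped Matrix.Norms.L2Operator NNReal ENNReal

namespace StmtAux

/-! ### vecNorm basics -/

lemma vecNorm_nonneg {ι : Type*} [Fintype ι] (v : ι → ℝ) : 0 ≤ vecNorm v :=
  Real.sqrt_nonneg _

lemma vecNorm_sq {ι : Type*} [Fintype ι] (v : ι → ℝ) : vecNorm v ^ 2 = ∑ i, (v i) ^ 2 :=
  Real.sq_sqrt (Finset.sum_nonneg fun _ _ => sq_nonneg _)

lemma vecNorm_eq_norm {ι : Type*} [Fintype ι] (v : ι → ℝ) :
    vecNorm v = ‖((WithLp.equiv 2 (ι → ℝ)).symm v : EuclideanSpace ℝ ι)‖ := by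
  rw [EuclideanSpace.norm_eq]
  unfold vecNorm
  congr 1
  refine Finset.sum_congr rfl fun i _ => ?_
  rw [WithLp.equiv_symm_apply, PiLp.toLp_apply]
  rw [Real.norm_eq_abs, sq_abs]

lemma vecNorm_smul {ι : Type*} [Fintype ι] (t : ℝ) (v : ι → ℝ) :
    vecNorm (t • v) = |t| * vecNorm v := by
  rw [vecNorm_eq_norm, vecNorm_eq_norm]
  have : ((WithLp.equiv 2 (ι → ℝ)).symm (t • v) : EuclideanSpace ℝ ι)
      = t • ((WithLp.equiv 2 (ι → ℝ)).symm v : EuclideanSpace ℝ ι) := rfl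
  rw [this, norm_smul, Real.norm_eq_abs]

lemma vecNorm_sum_le {ι κ : Type*} [Fintype ι] (s : Finset κ) (g : κ → ι → ℝ) :
    vecNorm (∑ j ∈ s, g j) ≤ ∑ j ∈ s, vecNorm (g j) := by
  simp only [vecNorm_eq_norm]
  have : ((WithLp.equiv 2 (ι → ℝ)).symm (∑ j ∈ s, g j) : EuclideanSpace ℝ ι)
      = ∑ j ∈ s, ((WithLp.equiv 2 (ι → ℝ)).symm (g j) : EuclideanSpace ℝ ι) := by
    classical
    induction s using Finset.induction_on with
    | empty => rfl
    | insert _ _ h ih => rw [Finset.sum_insert h, Finset.sum_insert h, ← ih]; rfl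
  rw [this]
  exact norm_sum_le _ _

lemma vecNorm_add_le {ι : Type*} [Fintype ι] (u v : ι → ℝ) :
    vecNorm (u + v) ≤ vecNorm u + vecNorm v := by
  simp only [vecNorm_eq_norm]
  exact norm_add_le _ _

lemma vecNorm_eq_zero {ι : Type*} [Fintype ι] {v : ι → ℝ} (h : vecNorm v = 0) : v = 0 := by
  rw [vecNorm_eq_norm] at h
  have := norm_eq_zero.mp h
  funext i
  exact congrFun (congrArg (WithLp.equiv 2 (ι → ℝ)) this) i

lemma mulVec_vecNorm_le {p q : Type*} [Fintype p] [Fintype q] [DecidableEq q]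
    (M : Matrix p q ℝ) (x : q → ℝ) :
    vecNorm (M *ᵥ x) ≤ ‖M‖ * vecNorm x := by
  rw [vecNorm_eq_norm, vecNorm_eq_norm]
  exact M.l2_opNorm_mulVec ((WithLp.equiv 2 (q → ℝ)).symm x)

lemma mulVec_vecNorm_le_complex {p q : Type*} [Fintype p] [Fintype q] [DecidableEq q]
    (M : Matrix p q ℝ) (x : q → ℝ) :
    vecNorm (M *ᵥ x) ≤ ‖M.map ((↑) : ℝ → ℂ)‖ * vecNorm x := by
  have key : (M.map ((↑) : ℝ → ℂ)) *ᵥ (fun j => (x j : ℂ)) = fun i => ((M *ᵥ x) i : ℂ) := by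
    funext i
    simp only [Matrix.mulVec, dotProduct, Matrix.map_apply]
    push_cast
    rfl
  have h := (M.map ((↑) : ℝ → ℂ)).l2_opNorm_mulVec
    ((WithLp.equiv 2 (q → ℂ)).symm (fun j => (x j : ℂ)))
  have e1 : ‖((WithLp.equiv 2 (q → ℂ)).symm (fun j => (x j : ℂ)) : EuclideanSpace ℂ q)‖
      = vecNorm x := by
    rw [EuclideanSpace.norm_eq, vecNorm]
    congr 1
    refine Finset.sum_congr rfl fun i _ => ?_
    rw [WithLp.equiv_symm_apply, PiLp.toLp_apply, Complex.norm_real, Real.norm_eq_abs, sq_abs]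
  have e2 : ‖((EuclideanSpace.equiv p ℂ).symm
      ((M.map ((↑) : ℝ → ℂ)) *ᵥ ((WithLp.equiv 2 (q → ℂ)).symm (fun j => (x j : ℂ)))))‖
      = vecNorm (M *ᵥ x) := by
    rw [show ((WithLp.equiv 2 (q → ℂ)).symm (fun j => (x j : ℂ)) : q → ℂ)
        = (fun j => (x j : ℂ)) from rfl]
    rw [EuclideanSpace.norm_eq, vecNorm]
    congr 1
    refine Finset.sum_congr rfl fun i _ => ?_
    have h3 : ((EuclideanSpace.equiv p ℂ).symm
        ((M.map ((↑) : ℝ → ℂ)) *ᵥ (fun j => (x j : ℂ)))) i = ((M *ᵥ x) i : ℂ) := by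
      rw [show ((EuclideanSpace.equiv p ℂ).symm
        ((M.map ((↑) : ℝ → ℂ)) *ᵥ (fun j => (x j : ℂ))) : p → ℂ)
        = ((M.map ((↑) : ℝ → ℂ)) *ᵥ (fun j => (x j : ℂ))) from rfl, key]
    rw [h3, Complex.norm_real, Real.norm_eq_abs, sq_abs]
  rw [← e1, ← e2]
  exact h

lemma mulVec_sum {p q κ : Type*} [Fintype q] (M : Matrix p q ℝ) (s : Finset κ)
    (f : κ → q → ℝ) : M *ᵥ (∑ j ∈ s, f j) = ∑ j ∈ s, M *ᵥ (f j) := by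
  funext x
  simp only [Matrix.mulVec, dotProduct, Finset.sum_apply, Finset.mul_sum]
  exact Finset.sum_comm

/-! ### geometric sums and the Gelfand-formula power bound -/

lemma geom_partial_le {r : ℝ} (h0 : 0 ≤ r) (h1 : r < 1) (K : ℕ) :
    ∑ m ∈ range K, r ^ m ≤ (1 - r)⁻¹ := by
  have h1r : 0 < 1 - r := by linarith
  have hg := geom_sum_mul r K
  have hK0 : (0:ℝ) ≤ r ^ K := by positivity
  rw [inv_eq_one_div, le_div_iff₀ h1r]
  nlinarith [hg]

lemma pow_bound {n : ℕ} (A : Matrix (Fin n) (Fin n) ℝ) (hA : SchurStable A) :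
    ∃ c r : ℝ, 0 ≤ c ∧ 0 ≤ r ∧ r < 1 ∧
      ∀ k : ℕ, ‖(A ^ k).map ((↑) : ℝ → ℂ)‖ ≤ c * r ^ k := by
  set A' : Matrix (Fin n) (Fin n) ℂ := A.map (algebraMap ℝ ℂ) with hA'
  have hmap : ∀ k : ℕ, (A ^ k).map ((↑) : ℝ → ℂ) = A' ^ k := by
    intro k
    rw [hA']
    have := map_pow ((algebraMap ℝ ℂ).mapMatrix) A k
    simpa [RingHom.mapMatrix_apply] using this
  obtain ⟨r, hρr, hr1⟩ := ENNReal.lt_iff_exists_nnreal_btwn.mp hA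
  have hrpos : (0:ℝ≥0) < r := by
    rcases eq_or_lt_of_le (zero_le : (0:ℝ≥0) ≤ r) with h | h
    · exfalso; rw [← h] at hρr; simp at hρr
    · exact h
  have hgel := spectrum.pow_nnnorm_pow_one_div_tendsto_nhds_spectralRadius A'
  have hev : ∀ᶠ k : ℕ in atTop, ((‖A' ^ k‖₊ : ℝ≥0∞) ^ (1 / (k:ℝ))) < (r : ℝ≥0∞) :=
    hgel.eventually_lt_const hρr
  obtain ⟨K, hK⟩ := hev.exists_forall_of_atTop
  have hbig : ∀ k, max K 1 ≤ k → ‖A' ^ k‖ ≤ (r:ℝ) ^ k := by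
    intro k hk
    have hk1 : 1 ≤ k := le_trans (le_max_right _ _) hk
    have hkK : K ≤ k := le_trans (le_max_left _ _) hk
    have h := hK k hkK
    have hkne : (k:ℝ) ≠ 0 := Nat.cast_ne_zero.mpr (by omega)
    have h2 : ((‖A' ^ k‖₊ : ℝ≥0∞) ^ (1 / (k:ℝ))) ^ (k:ℝ) ≤ ((r : ℝ≥0∞)) ^ (k:ℝ) :=
      ENNReal.rpow_le_rpow h.le (by positivity)
    rw [← ENNReal.rpow_mul, one_div, inv_mul_cancel₀ hkne, ENNReal.rpow_one,
      ENNReal.rpow_natCast, ← ENNReal.coe_pow, ENNReal.coe_le_coe] at h2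
    calc ‖A' ^ k‖ = ((‖A' ^ k‖₊ : ℝ≥0) : ℝ) := rfl
    _ ≤ ((r ^ k : ℝ≥0) : ℝ) := NNReal.coe_le_coe.mpr h2
    _ = (r:ℝ) ^ k := by push_cast; ring
  have hS0 : (0:ℝ) ≤ ∑ j ∈ range (max K 1), ‖A' ^ j‖ / (r:ℝ) ^ j :=
    Finset.sum_nonneg fun j _ => by positivity
  set c : ℝ := 1 + ∑ j ∈ range (max K 1), ‖A' ^ j‖ / (r:ℝ) ^ j with hc
  have hcnn : (0:ℝ) ≤ c := by positivity
  refine ⟨c, r, hcnn, r.coe_nonneg, by exact_mod_cast hr1, fun k => ?_⟩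
  rw [hmap]
  rcases lt_or_ge k (max K 1) with hlt | hge
  · have hmem : k ∈ range (max K 1) := Finset.mem_range.mpr hlt
    have h1 : ‖A' ^ k‖ / (r:ℝ) ^ k ≤ ∑ j ∈ range (max K 1), ‖A' ^ j‖ / (r:ℝ) ^ j :=
      Finset.single_le_sum (f := fun j => ‖A' ^ j‖ / (r:ℝ) ^ j)
        (fun j _ => by positivity) hmem
    have hrk : (0:ℝ) < (r:ℝ) ^ k := by positivity
    rw [div_le_iff₀ hrk] at h1
    calc ‖A' ^ k‖ ≤ (∑ j ∈ range (max K 1), ‖A' ^ j‖ / (r:ℝ) ^ j) * (r:ℝ) ^ k := h1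
    _ ≤ c * (r:ℝ) ^ k := by
        apply mul_le_mul_of_nonneg_right _ hrk.le
        rw [hc]; linarith
  · calc ‖A' ^ k‖ ≤ (r:ℝ) ^ k := hbig k hge
    _ = 1 * (r:ℝ) ^ k := (one_mul _).symm
    _ ≤ c * (r:ℝ) ^ k := by
        apply mul_le_mul_of_nonneg_right _ (by positivity)
        rw [hc]; linarith

/-! ### state/output formulas and causality -/

lemma state_eq {n nw : ℕ} (A : Matrix (Fin n) (Fin n) ℝ) (B : Matrix (Fin n) (Fin nw) ℝ)
    (ws : ℕ → Fin nw → ℝ) (k : ℕ) :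
    ltiState A B ws k = ∑ j ∈ range k, (A ^ (k - 1 - j) * B) *ᵥ (ws j) := by
  induction k with
  | zero => simp [ltiState]
  | succ k ih =>
    show A *ᵥ (ltiState A B ws k) + B *ᵥ (ws k) = _
    rw [ih, Finset.sum_range_succ]
    congr 1
    · rw [mulVec_sum]
      refine Finset.sum_congr rfl fun j hj => ?_
      have hjk : j < k := Finset.mem_range.mp hj
      rw [Matrix.mulVec_mulVec, ← Matrix.mul_assoc, ← pow_succ']
      have he : k - 1 - j + 1 = k + 1 - 1 - j := by omega
      rw [he]
    · simp

variable {n nw nz : ℕ}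
variable (A : Matrix (Fin n) (Fin n) ℝ) (B : Matrix (Fin n) (Fin nw) ℝ)
variable (C : Matrix (Fin nz) (Fin n) ℝ) (D : Matrix (Fin nz) (Fin nw) ℝ)

lemma out_eq (ws : ℕ → Fin nw → ℝ) (N : ℕ) (r : Fin N) (i : Fin nz) :
    ((liftD A B C D N) *ᵥ (fun c => ws c.1 c.2)) (r, i) = ltiOutput A B C D ws r i := by
  have lhs_eq : ((liftD A B C D N) *ᵥ (fun c => ws c.1 c.2)) (r, i)
      = ∑ m : Fin N, ∑ j : Fin nw,
          (if (r : ℕ) = (m : ℕ) then D i j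
            else if (m : ℕ) < (r : ℕ) then (C * A ^ ((r:ℕ) - (m:ℕ) - 1) * B) i j else 0)
          * ws m j := by
    simp only [Matrix.mulVec, dotProduct, Fintype.sum_prod_type, liftD, Matrix.of_apply]
  rw [lhs_eq]
  have step : ∀ m : Fin N, (∑ j : Fin nw,
      (if (r : ℕ) = (m : ℕ) then D i j
        else if (m : ℕ) < (r : ℕ) then (C * A ^ ((r:ℕ) - (m:ℕ) - 1) * B) i j else 0) * ws m j)
      = (fun mm : ℕ => if (r : ℕ) = mm then ∑ j, D i j * ws mm j
          else if mm < (r : ℕ) then ∑ j, (C * A ^ ((r:ℕ) - mm - 1) * B) i j * ws mm j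
          else 0) (m : ℕ) := by
    intro m
    by_cases h1 : (r : ℕ) = (m : ℕ)
    · simp [h1]
    · by_cases h2 : (m : ℕ) < (r : ℕ) <;> simp [h1, h2]
  calc ∑ m : Fin N, ∑ j : Fin nw,
      (if (r : ℕ) = (m : ℕ) then D i j
        else if (m : ℕ) < (r : ℕ) then (C * A ^ ((r:ℕ) - (m:ℕ) - 1) * B) i j else 0) * ws m j
      = ∑ m : Fin N, (fun mm : ℕ => if (r : ℕ) = mm then ∑ j, D i j * ws mm j
          else if mm < (r : ℕ) then ∑ j, (C * A ^ ((r:ℕ) - mm - 1) * B) i j * ws mm j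
          else 0) (m : ℕ) := Finset.sum_congr rfl fun m _ => step m
    _ = ∑ mm ∈ range N, (if (r : ℕ) = mm then ∑ j, D i j * ws mm j
          else if mm < (r : ℕ) then ∑ j, (C * A ^ ((r:ℕ) - mm - 1) * B) i j * ws mm j
          else 0) := Fin.sum_univ_eq_sum_range (fun mm => if (r : ℕ) = mm
            then ∑ j, D i j * ws mm j
            else if mm < (r : ℕ) then ∑ j, (C * A ^ ((r:ℕ) - mm - 1) * B) i j * ws mm j
            else 0) N
    _ = ∑ mm ∈ range ((r:ℕ) + 1), (if (r : ℕ) = mm then ∑ j, D i j * ws mm j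
          else if mm < (r : ℕ) then ∑ j, (C * A ^ ((r:ℕ) - mm - 1) * B) i j * ws mm j
          else 0) := by
        refine (Finset.sum_subset ?_ ?_).symm
        · intro x hx
          simp only [Finset.mem_range] at *
          have := r.2
          omega
        · intro x hx hx'
          simp only [Finset.mem_range, not_lt] at hx hx'
          have hne : (r:ℕ) ≠ x := by omega
          have hnlt : ¬ x < (r:ℕ) := by omega
          simp [hne, hnlt]
    _ = ltiOutput A B C D ws r i := by
        rw [Finset.sum_range_succ]
        simp only [if_pos rfl]
        have hlt : ∀ mm ∈ range (r:ℕ), (if (r : ℕ) = mm then ∑ j, D i j * ws mm j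
          else if mm < (r : ℕ) then ∑ j, (C * A ^ ((r:ℕ) - mm - 1) * B) i j * ws mm j
          else 0) = ∑ j, (C * A ^ ((r:ℕ) - 1 - mm) * B) i j * ws mm j := by
          intro mm hmm
          simp only [Finset.mem_range] at hmm
          have hne : ¬ (r:ℕ) = mm := by omega
          have : (r:ℕ) - mm - 1 = (r:ℕ) - 1 - mm := by omega
          simp [hne, hmm, this]
        rw [Finset.sum_congr rfl hlt]
        show _ = C.mulVec (ltiState A B ws r) i + D.mulVec (ws r) i
        rw [state_eq, mulVec_sum]
        have hD : (∑ j, D i j * ws (r:ℕ) j) = D.mulVec (ws (r:ℕ)) i := by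
          simp [Matrix.mulVec, dotProduct]
        have hC : (∑ mm ∈ range (r:ℕ), ∑ j, (C * A ^ ((r:ℕ)-1-mm) * B) i j * ws mm j)
            = (∑ j ∈ range (r:ℕ), C *ᵥ ((A ^ ((r:ℕ) - 1 - j) * B) *ᵥ ws j)) i := by
          rw [Finset.sum_apply]
          refine Finset.sum_congr rfl fun mm _ => ?_
          rw [Matrix.mulVec_mulVec, ← Matrix.mul_assoc]
          simp [Matrix.mulVec, dotProduct]
        rw [hC, hD]
        rfl

/-! ### Young convolution inequality -/

lemma young (h a : ℕ → ℝ) (hh : ∀ m, 0 ≤ h m) (S Sa : ℝ)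
    (hS : ∀ K, ∑ m ∈ range K, h m ≤ S) (hSa : ∀ K, ∑ j ∈ range K, (a j) ^ 2 ≤ Sa)
    (K : ℕ) :
    ∑ k ∈ range K, (∑ j ∈ range (k + 1), h (k - j) * a j) ^ 2 ≤ S ^ 2 * Sa := by
  have hS0 : 0 ≤ S := le_trans (by simp) (hS 0)
  have cs : ∀ k, (∑ j ∈ range (k + 1), h (k - j) * a j) ^ 2
      ≤ S * ∑ j ∈ range (k + 1), h (k - j) * (a j) ^ 2 := by
    intro k
    have csk := Finset.sum_mul_sq_le_sq_mul_sq (range (k + 1))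
      (fun j => Real.sqrt (h (k - j))) (fun j => Real.sqrt (h (k - j)) * a j)
    have e1 : (∑ j ∈ range (k + 1), Real.sqrt (h (k - j)) * (Real.sqrt (h (k - j)) * a j))
        = ∑ j ∈ range (k + 1), h (k - j) * a j := by
      refine Finset.sum_congr rfl fun j _ => ?_
      rw [← mul_assoc, Real.mul_self_sqrt (hh _)]
    have e2 : (∑ j ∈ range (k + 1), (Real.sqrt (h (k - j))) ^ 2)
        = ∑ j ∈ range (k + 1), h (k - j) := by
      refine Finset.sum_congr rfl fun j _ => ?_
      rw [Real.sq_sqrt (hh _)]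
    have e3 : (∑ j ∈ range (k + 1), (Real.sqrt (h (k - j)) * a j) ^ 2)
        = ∑ j ∈ range (k + 1), h (k - j) * (a j) ^ 2 := by
      refine Finset.sum_congr rfl fun j _ => ?_
      rw [mul_pow, Real.sq_sqrt (hh _)]
    rw [e1, e2, e3] at csk
    refine le_trans csk (mul_le_mul_of_nonneg_right ?_ ?_)
    · calc ∑ j ∈ range (k + 1), h (k - j) = ∑ j ∈ range (k + 1), h (k + 1 - 1 - j) := by
            refine Finset.sum_congr rfl fun j _ => ?_
            norm_num
      _ = ∑ j ∈ range (k + 1), h j := Finset.sum_range_reflect h (k + 1)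
      _ ≤ S := hS _
    · exact Finset.sum_nonneg fun j _ => mul_nonneg (hh _) (sq_nonneg _)
  calc ∑ k ∈ range K, (∑ j ∈ range (k + 1), h (k - j) * a j) ^ 2
      ≤ ∑ k ∈ range K, S * ∑ j ∈ range (k + 1), h (k - j) * (a j) ^ 2 :=
        Finset.sum_le_sum fun k _ => cs k
    _ = S * ∑ k ∈ range K, ∑ j ∈ range (k + 1), h (k - j) * (a j) ^ 2 := by
        rw [Finset.mul_sum]
    _ ≤ S * (S * Sa) := ?_
    _ = S ^ 2 * Sa := by ring
  refine mul_le_mul_of_nonneg_left ?_ hS0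
  have swap : (∑ k ∈ range K, ∑ j ∈ range (k + 1), h (k - j) * (a j) ^ 2)
      = ∑ j ∈ range K, ∑ k ∈ range K, (if j ≤ k then h (k - j) * (a j) ^ 2 else 0) := by
    rw [Finset.sum_comm]
    refine Finset.sum_congr rfl fun k hk => ?_
    rw [Finset.mem_range] at hk
    rw [← Finset.sum_filter]
    refine Finset.sum_congr ?_ (fun _ _ => rfl)
    ext j
    simp only [Finset.mem_filter, Finset.mem_range]
    omega
  rw [swap]
  calc ∑ j ∈ range K, ∑ k ∈ range K, (if j ≤ k then h (k - j) * (a j) ^ 2 else 0)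
      ≤ ∑ j ∈ range K, (a j) ^ 2 * S := by
        refine Finset.sum_le_sum fun j hj => ?_
        have e : (∑ k ∈ range K, if j ≤ k then h (k - j) * (a j) ^ 2 else 0)
            = (a j) ^ 2 * ∑ k ∈ Ico j K, h (k - j) := by
          rw [Finset.mul_sum]
          rw [← Finset.sum_filter]
          have : Finset.filter (fun k => j ≤ k) (range K) = Finset.Ico j K := by
            ext k
            simp only [Finset.mem_filter, Finset.mem_range, Finset.mem_Ico]
            omega
          rw [this]
          exact Finset.sum_congr rfl fun k _ => mul_comm _ _
        rw [e]
        refine mul_le_mul_of_nonneg_left ?_ (sq_nonneg _)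
        rw [Finset.sum_Ico_eq_sum_range]
        calc ∑ k ∈ range (K - j), h (j + k - j) = ∑ k ∈ range (K - j), h k := by
              refine Finset.sum_congr rfl fun k _ => ?_
              congr 1
              omega
          _ ≤ S := hS _
    _ = (∑ j ∈ range K, (a j) ^ 2) * S := by rw [Finset.sum_mul]
    _ ≤ Sa * S := mul_le_mul_of_nonneg_right (hSa K) hS0
    _ = S * Sa := mul_comm _ _

/-! ### uniform output bound -/

lemma output_partial_bound
    (hpow : ∃ c r : ℝ, 0 ≤ c ∧ 0 ≤ r ∧ r < 1 ∧
      ∀ k : ℕ, ‖(A ^ k).map ((↑) : ℝ → ℂ)‖ ≤ c * r ^ k) :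
    ∃ S : ℝ, 0 ≤ S ∧ ∀ (ws : ℕ → Fin nw → ℝ) (Sa : ℝ),
      (∀ K, ∑ j ∈ range K, ∑ i, (ws j i) ^ 2 ≤ Sa) →
      ∀ K, ∑ k ∈ range K, ∑ i, (ltiOutput A B C D ws k i) ^ 2 ≤ S * Sa := by
  obtain ⟨c, r, hc, hr0, hr1, hpw⟩ := hpow
  set h : ℕ → ℝ := fun m => if m = 0 then ‖D‖ else ‖C‖ * c * ‖B‖ * r ^ (m - 1) with hh_def
  have hh : ∀ m, 0 ≤ h m := by
    intro m
    rw [hh_def]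
    dsimp only
    split
    · exact norm_nonneg _
    · positivity
  set S0 : ℝ := ‖D‖ + ‖C‖ * c * ‖B‖ * (1 - r)⁻¹ with hS0_def
  have hS0nn : 0 ≤ S0 := by
    have : (0:ℝ) ≤ (1 - r)⁻¹ := by
      have : (0:ℝ) < 1 - r := by linarith
      positivity
    rw [hS0_def]
    positivity
  have hSsum : ∀ K, ∑ m ∈ range K, h m ≤ S0 := by
    intro K
    cases K with
    | zero => simpa using hS0nn
    | succ K' =>
      rw [Finset.sum_range_succ']
      have e1 : ∀ i : ℕ, h (i + 1) = ‖C‖ * c * ‖B‖ * r ^ i := by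
        intro i
        rw [hh_def]
        simp
      have e2 : h 0 = ‖D‖ := by rw [hh_def]; simp
      rw [e2, Finset.sum_congr rfl (fun i _ => e1 i), ← Finset.mul_sum]
      have hgp := geom_partial_le hr0 hr1 K'
      have hcb : (0:ℝ) ≤ ‖C‖ * c * ‖B‖ := by positivity
      rw [hS0_def]
      have := mul_le_mul_of_nonneg_left hgp hcb
      linarith
  refine ⟨S0 ^ 2, by positivity, fun ws Sa hSa K => ?_⟩
  set a : ℕ → ℝ := fun j => vecNorm (ws j) with ha_def
  have haSa : ∀ K, ∑ j ∈ range K, (a j) ^ 2 ≤ Sa := by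
    intro K
    refine le_trans (le_of_eq (Finset.sum_congr rfl fun j _ => vecNorm_sq (ws j))) (hSa K)
  have step : ∀ k, vecNorm (ltiOutput A B C D ws k)
      ≤ ∑ j ∈ range (k + 1), h (k - j) * a j := by
    intro k
    have e0 : ltiOutput A B C D ws k = C *ᵥ (ltiState A B ws k) + D *ᵥ (ws k) := rfl
    rw [e0, state_eq, mulVec_sum]
    refine le_trans (vecNorm_add_le _ _) ?_
    rw [Finset.sum_range_succ]
    have t1 : vecNorm (∑ j ∈ range k, C *ᵥ ((A ^ (k - 1 - j) * B) *ᵥ ws j))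
        ≤ ∑ j ∈ range k, h (k - j) * a j := by
      refine le_trans (vecNorm_sum_le _ _) (Finset.sum_le_sum fun j hj => ?_)
      have hjk : j < k := Finset.mem_range.mp hj
      have e1 : (A ^ (k - 1 - j) * B) *ᵥ ws j = (A ^ (k - 1 - j)) *ᵥ (B *ᵥ ws j) :=
        (Matrix.mulVec_mulVec _ _ _).symm
      rw [e1]
      calc vecNorm (C *ᵥ ((A ^ (k - 1 - j)) *ᵥ (B *ᵥ ws j)))
          ≤ ‖C‖ * vecNorm ((A ^ (k - 1 - j)) *ᵥ (B *ᵥ ws j)) := mulVec_vecNorm_le _ _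
        _ ≤ ‖C‖ * ((c * r ^ (k - 1 - j)) * vecNorm (B *ᵥ ws j)) := by
            refine mul_le_mul_of_nonneg_left ?_ (norm_nonneg _)
            refine le_trans (mulVec_vecNorm_le_complex _ _) ?_
            exact mul_le_mul_of_nonneg_right (hpw _) (vecNorm_nonneg _)
        _ ≤ ‖C‖ * ((c * r ^ (k - 1 - j)) * (‖B‖ * a j)) := by
            refine mul_le_mul_of_nonneg_left ?_ (norm_nonneg _)
            refine mul_le_mul_of_nonneg_left ?_ (by positivity)
            exact mulVec_vecNorm_le _ _
        _ = h (k - j) * a j := by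
            have hne : ¬ (k - j = 0) := by omega
            have he : k - j - 1 = k - 1 - j := by omega
            rw [hh_def]
            dsimp only
            rw [if_neg hne, he]
            ring
    have t2 : vecNorm (D *ᵥ ws k) ≤ h (k - k) * a k := by
      have hkk : k - k = 0 := Nat.sub_self k
      rw [hkk, hh_def]
      dsimp only
      rw [if_pos rfl]
      exact mulVec_vecNorm_le _ _
    linarith
  calc ∑ k ∈ range K, ∑ i, (ltiOutput A B C D ws k i) ^ 2
      = ∑ k ∈ range K, (vecNorm (ltiOutput A B C D ws k)) ^ 2 :=
        Finset.sum_congr rfl fun k _ => (vecNorm_sq _).symm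
    _ ≤ ∑ k ∈ range K, (∑ j ∈ range (k + 1), h (k - j) * a j) ^ 2 := by
        refine Finset.sum_le_sum fun k _ => ?_
        exact pow_le_pow_left₀ (vecNorm_nonneg _) (step k) 2
    _ ≤ S0 ^ 2 * Sa := young h a hh S0 Sa hSsum haSa K

/-! ### matPosNorm basics -/

lemma matPosNorm_nonneg {ι κ : Type*} [Fintype ι] [Fintype κ] (M : Matrix ι κ ℝ) :
    0 ≤ matPosNorm M := by
  refine Real.sSup_nonneg fun x hx => ?_
  obtain ⟨v, _, _, rfl⟩ := hx
  exact vecNorm_nonneg _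

lemma matPosNorm_bddAbove {ι κ : Type*} [Fintype ι] [Fintype κ] [DecidableEq κ]
    (M : Matrix ι κ ℝ) :
    BddAbove {c : ℝ | ∃ v : κ → ℝ, (∀ i, 0 ≤ v i) ∧ vecNorm v = 1 ∧
      c = vecNorm (M.mulVec v)} := by
  refine ⟨‖M‖, fun c hc => ?_⟩
  obtain ⟨v, _, hv1, rfl⟩ := hc
  calc vecNorm (M *ᵥ v) ≤ ‖M‖ * vecNorm v := mulVec_vecNorm_le M v
  _ = ‖M‖ := by rw [hv1, mul_one]

lemma matPosNorm_mulVec_le {ι κ : Type*} [Fintype ι] [Fintype κ] [DecidableEq κ]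
    (M : Matrix ι κ ℝ) (v : κ → ℝ) (hv : ∀ i, 0 ≤ v i) :
    vecNorm (M.mulVec v) ≤ matPosNorm M * vecNorm v := by
  rcases eq_or_ne (vecNorm v) 0 with h0 | h0
  · have hv0 : v = 0 := vecNorm_eq_zero h0
    rw [h0, mul_zero, hv0, Matrix.mulVec_zero]
    have : vecNorm (0 : ι → ℝ) = 0 := by
      simp [vecNorm]
    rw [this]
  · have hpos : 0 < vecNorm v := lt_of_le_of_ne (vecNorm_nonneg v) (Ne.symm h0)
    set u : κ → ℝ := (vecNorm v)⁻¹ • v with hu_def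
    have hu0 : ∀ i, 0 ≤ u i := fun i =>
      mul_nonneg (inv_nonneg.mpr hpos.le) (hv i)
    have hu1 : vecNorm u = 1 := by
      rw [hu_def, vecNorm_smul, abs_of_nonneg (inv_nonneg.mpr hpos.le)]
      field_simp
    have hmem : vecNorm (M *ᵥ u) ∈ {c : ℝ | ∃ w : κ → ℝ, (∀ i, 0 ≤ w i) ∧ vecNorm w = 1 ∧
        c = vecNorm (M.mulVec w)} := ⟨u, hu0, hu1, rfl⟩
    have hle : vecNorm (M *ᵥ u) ≤ matPosNorm M := le_csSup (matPosNorm_bddAbove M) hmem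
    have hvu : M *ᵥ v = (vecNorm v) • (M *ᵥ u) := by
      rw [hu_def, Matrix.mulVec_smul, smul_smul, mul_inv_cancel₀ h0, one_smul]
    rw [hvu, vecNorm_smul, abs_of_nonneg hpos.le, mul_comm (matPosNorm M) (vecNorm v)]
    exact mul_le_mul_of_nonneg_left hle hpos.le

lemma sq_sum_prod {m : ℕ} (N : ℕ) (g : ℕ → Fin m → ℝ) :
    ∑ p : Fin N × Fin m, (g p.1 p.2) ^ 2 = ∑ k ∈ range N, ∑ i, (g k i) ^ 2 := by
  rw [Fintype.sum_prod_type]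
  exact Fin.sum_univ_eq_sum_range (fun k => ∑ i, (g k i) ^ 2) N

end StmtAux


/-- N ↦ ‖D̂_N‖_{2+} is monotonically non-decreasing and converges to
the positive l2 induced norm of G. -/
theorem stmt_8 (n nw nz : ℕ)
    (A : Matrix (Fin n) (Fin n) ℝ) (B : Matrix (Fin n) (Fin nw) ℝ)
    (C : Matrix (Fin nz) (Fin n) ℝ) (D : Matrix (Fin nz) (Fin nw) ℝ)
    (hA : SchurStable A) :
    Monotone (fun N : ℕ => matPosNorm (liftD A B C D N)) ∧
    Filter.Tendsto (fun N : ℕ => matPosNorm (liftD A B C D N)) Filter.atTop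
      (nhds (posL2Gain A B C D)) := by
  classical
  obtain ⟨S, hSnn, hSbound⟩ := StmtAux.output_partial_bound A B C D (StmtAux.pow_bound A hA)
  set f : ℕ → ℝ := fun N => matPosNorm (liftD A B C D N) with hf_def
  -- squared norm of lifted output equals partial sum of output energies
  have hout_sq : ∀ (ws : ℕ → Fin nw → ℝ) (N : ℕ),
      (vecNorm ((liftD A B C D N) *ᵥ (fun c => ws c.1 c.2))) ^ 2
      = ∑ k ∈ Finset.range N, ∑ i, (ltiOutput A B C D ws k i) ^ 2 := by
    intro ws N
    rw [StmtAux.vecNorm_sq]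
    have hptw : ∀ p : Fin N × Fin nz,
        (((liftD A B C D N) *ᵥ (fun c => ws c.1 c.2)) p) ^ 2
        = (ltiOutput A B C D ws p.1 p.2) ^ 2 := by
      rintro ⟨r, i⟩
      rw [StmtAux.out_eq A B C D ws N r i]
    rw [Finset.sum_congr rfl (fun p _ => hptw p)]
    exact StmtAux.sq_sum_prod N (fun k => ltiOutput A B C D ws k)
  -- facts about admissible input signals
  have hadm : ∀ ws : ℕ → Fin nw → ℝ, Summable (fun k => ∑ i, (ws k i) ^ 2) →
      sigNorm ws = 1 →
      (∀ K, ∑ j ∈ Finset.range K, ∑ i, (ws j i) ^ 2 ≤ 1) ∧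
      Summable (fun k => ∑ i, (ltiOutput A B C D ws k i) ^ 2) ∧
      (∀ K, ∑ k ∈ Finset.range K, ∑ i, (ltiOutput A B C D ws k i) ^ 2 ≤ S) := by
    intro ws hsum hsig
    have hsig' : Real.sqrt (∑' k, ∑ i, (ws k i) ^ 2) = 1 := hsig
    have htsum : (∑' k, ∑ i, (ws k i) ^ 2) = 1 := Real.sqrt_eq_one.mp hsig'
    have hpart : ∀ K, ∑ j ∈ Finset.range K, ∑ i, (ws j i) ^ 2 ≤ 1 := fun K =>
      le_of_le_of_eq (hsum.sum_le_tsum (Finset.range K)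
        (fun j _ => Finset.sum_nonneg fun i _ => sq_nonneg _)) htsum
    have hout := hSbound ws 1 hpart
    have houtS : ∀ K, ∑ k ∈ Finset.range K, ∑ i, (ltiOutput A B C D ws k i) ^ 2 ≤ S :=
      fun K => by simpa using hout K
    exact ⟨hpart, summable_of_sum_range_le
      (fun k => Finset.sum_nonneg fun i _ => sq_nonneg _) houtS, houtS⟩
  -- posL2Gain is nonnegative and its defining set is bounded above
  have hPnonneg : 0 ≤ posL2Gain A B C D := by
    refine Real.sSup_nonneg fun x hx => ?_
    obtain ⟨ws, _, _, _, rfl⟩ := hx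
    exact Real.sqrt_nonneg _
  have hPbdd : BddAbove {c : ℝ | ∃ ws : ℕ → Fin nw → ℝ, (∀ k i, 0 ≤ ws k i) ∧
      Summable (fun k => ∑ i, (ws k i) ^ 2) ∧ sigNorm ws = 1 ∧
      c = sigNorm (ltiOutput A B C D ws)} := by
    refine ⟨Real.sqrt S, fun c hc => ?_⟩
    obtain ⟨ws, _, hsum, hsig, rfl⟩ := hc
    obtain ⟨_, hbs, hbp⟩ := hadm ws hsum hsig
    show Real.sqrt _ ≤ Real.sqrt S
    exact Real.sqrt_le_sqrt (hbs.tsum_le_of_sum_range_le hbp)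
  -- the core sum identity for truncated inputs
  have hcore : ∀ (N : ℕ) (v : Fin N × Fin nw → ℝ),
      (∑ k ∈ Finset.range N, ∑ i,
        ((fun k i => if h : k < N then v (⟨k, h⟩, i) else 0) k i) ^ 2)
      = ∑ p : Fin N × Fin nw, (v p) ^ 2 := by
    intro N v
    rw [← StmtAux.sq_sum_prod N (fun k i => if h : k < N then v (⟨k, h⟩, i) else 0)]
    refine Finset.sum_congr rfl fun p _ => ?_
    have hp : (p.1 : ℕ) < N := p.1.2
    simp only [hp, dif_pos, Fin.eta]
  -- each lifted norm is at most posL2Gain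
  have hfle : ∀ N, f N ≤ posL2Gain A B C D := by
    intro N
    refine Real.sSup_le ?_ hPnonneg
    rintro c ⟨v, hv0, hv1, rfl⟩
    set ws : ℕ → Fin nw → ℝ := fun k i => if h : k < N then v (⟨k, h⟩, i) else 0 with hws_def
    have hws0 : ∀ k i, 0 ≤ ws k i := by
      intro k i
      rw [hws_def]
      dsimp only
      split
      · exact hv0 _
      · exact le_refl 0
    have hws_zero : ∀ k, k ∉ Finset.range N → (∑ i, (ws k i) ^ 2) = 0 := by
      intro k hk
      rw [Finset.mem_range, not_lt] at hk
      refine Finset.sum_eq_zero fun i _ => ?_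
      rw [hws_def]
      dsimp only
      rw [dif_neg (by omega)]
      norm_num
    have hsum_in : Summable (fun k => ∑ i, (ws k i) ^ 2) :=
      summable_of_ne_finset_zero hws_zero
    have hin_core : ∑ k ∈ Finset.range N, ∑ i, (ws k i) ^ 2 = 1 := by
      rw [hws_def, hcore N v]
      rw [← StmtAux.vecNorm_sq v, hv1, one_pow]
    have htsum_in : (∑' k, ∑ i, (ws k i) ^ 2) = 1 := by
      rw [tsum_eq_sum hws_zero, hin_core]
    have hsig_in : sigNorm ws = 1 := by
      show Real.sqrt _ = 1
      rw [htsum_in, Real.sqrt_one]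
    obtain ⟨_, hbsum, hbS⟩ := hadm ws hsum_in hsig_in
    have hveq : (fun c : Fin N × Fin nw => ws c.1 c.2) = v := by
      funext p
      rw [hws_def]
      dsimp only
      rw [dif_pos p.1.2]
    have hc2 : (vecNorm ((liftD A B C D N).mulVec v)) ^ 2
        = ∑ k ∈ Finset.range N, ∑ i, (ltiOutput A B C D ws k i) ^ 2 := by
      rw [← hveq]
      exact hout_sq ws N
    have hcle : vecNorm ((liftD A B C D N).mulVec v) ≤ sigNorm (ltiOutput A B C D ws) := by
      have h1 : vecNorm ((liftD A B C D N).mulVec v)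
          = Real.sqrt (∑ k ∈ Finset.range N, ∑ i, (ltiOutput A B C D ws k i) ^ 2) := by
        rw [← hc2, Real.sqrt_sq (StmtAux.vecNorm_nonneg _)]
      rw [h1]
      show Real.sqrt _ ≤ Real.sqrt _
      refine Real.sqrt_le_sqrt ?_
      exact hbsum.sum_le_tsum (Finset.range N)
        (fun k _ => Finset.sum_nonneg fun i _ => sq_nonneg _)
    exact le_trans hcle (le_csSup hPbdd ⟨ws, hws0, hsum_in, hsig_in, rfl⟩)
  -- monotonicity
  have hmono : Monotone f := by
    refine monotone_nat_of_le_succ fun N => ?_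
    refine Real.sSup_le ?_ (StmtAux.matPosNorm_nonneg _)
    rintro c ⟨v, hv0, hv1, rfl⟩
    set ws : ℕ → Fin nw → ℝ := fun k i => if h : k < N then v (⟨k, h⟩, i) else 0 with hws_def
    have hws_zero : ∀ k, N ≤ k → (∀ i, ws k i = 0) := by
      intro k hk i
      rw [hws_def]
      dsimp only
      rw [dif_neg (by omega)]
    have hveq : (fun c : Fin N × Fin nw => ws c.1 c.2) = v := by
      funext p
      rw [hws_def]
      dsimp only
      rw [dif_pos p.1.2]
    have hin_core : ∑ k ∈ Finset.range N, ∑ i, (ws k i) ^ 2 = 1 := by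
      rw [hws_def, hcore N v, ← StmtAux.vecNorm_sq v, hv1, one_pow]
    set v' : Fin (N + 1) × Fin nw → ℝ := fun c => ws c.1 c.2 with hv'_def
    have hv'0 : ∀ p, 0 ≤ v' p := by
      rintro ⟨m, i⟩
      rw [hv'_def]
      dsimp only
      rw [hws_def]
      dsimp only
      split
      · exact hv0 _
      · exact le_refl 0
    have hv'sq : ∑ p : Fin (N + 1) × Fin nw, (v' p) ^ 2 = 1 := by
      rw [hv'_def]
      rw [StmtAux.sq_sum_prod (N + 1) ws, Finset.sum_range_succ]
      have hz : (∑ i, (ws N i) ^ 2) = 0 := by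
        refine Finset.sum_eq_zero fun i _ => ?_
        rw [hws_zero N le_rfl i]
        norm_num
      rw [hz, add_zero, hin_core]
    have hv'1 : vecNorm v' = 1 := by
      have : (vecNorm v') ^ 2 = 1 := by rw [StmtAux.vecNorm_sq, hv'sq]
      nlinarith [StmtAux.vecNorm_nonneg v']
    have hcc' : vecNorm ((liftD A B C D N).mulVec v)
        ≤ vecNorm ((liftD A B C D (N + 1)).mulVec v') := by
      have h1 : (vecNorm ((liftD A B C D N).mulVec v)) ^ 2
          = ∑ k ∈ Finset.range N, ∑ i, (ltiOutput A B C D ws k i) ^ 2 := by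
        rw [← hveq]; exact hout_sq ws N
      have h2 : (vecNorm ((liftD A B C D (N + 1)).mulVec v')) ^ 2
          = ∑ k ∈ Finset.range (N + 1), ∑ i, (ltiOutput A B C D ws k i) ^ 2 := by
        rw [hv'_def]; exact hout_sq ws (N + 1)
      have h3 : (vecNorm ((liftD A B C D N).mulVec v)) ^ 2
          ≤ (vecNorm ((liftD A B C D (N + 1)).mulVec v')) ^ 2 := by
        rw [h1, h2, Finset.sum_range_succ]
        have : 0 ≤ ∑ i, (ltiOutput A B C D ws N i) ^ 2 :=
          Finset.sum_nonneg fun i _ => sq_nonneg _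
        linarith
      nlinarith [StmtAux.vecNorm_nonneg ((liftD A B C D N).mulVec v),
        StmtAux.vecNorm_nonneg ((liftD A B C D (N + 1)).mulVec v')]
    refine le_trans hcc' (le_csSup (StmtAux.matPosNorm_bddAbove _) ?_)
    exact ⟨v', hv'0, hv'1, rfl⟩
  -- convergence
  have hbdd : BddAbove (Set.range f) := by
    refine ⟨posL2Gain A B C D, ?_⟩
    rintro x ⟨N, rfl⟩
    exact hfle N
  have htend : Filter.Tendsto f Filter.atTop (nhds (⨆ N, f N)) :=
    tendsto_atTop_ciSup hmono hbdd
  have hL0 : 0 ≤ ⨆ N, f N :=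
    le_trans (StmtAux.matPosNorm_nonneg _) (le_ciSup hbdd 0)
  have hle1 : (⨆ N, f N) ≤ posL2Gain A B C D := ciSup_le hfle
  have hle2 : posL2Gain A B C D ≤ ⨆ N, f N := by
    refine Real.sSup_le ?_ hL0
    rintro c ⟨ws, hws0, hsum, hsig, rfl⟩
    obtain ⟨hpart, hbsum, _⟩ := hadm ws hsum hsig
    have hKb : ∀ K, ∑ k ∈ Finset.range K, ∑ i, (ltiOutput A B C D ws k i) ^ 2
        ≤ (⨆ N, f N) ^ 2 := by
      intro K
      rw [← hout_sq ws K]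
      have hvK0 : ∀ p : Fin K × Fin nw, 0 ≤ (fun c : Fin K × Fin nw => ws c.1 c.2) p :=
        fun p => hws0 _ _
      have hvKle : vecNorm (fun c : Fin K × Fin nw => ws c.1 c.2) ≤ 1 := by
        have hsq : (vecNorm (fun c : Fin K × Fin nw => ws c.1 c.2)) ^ 2 ≤ 1 := by
          rw [StmtAux.vecNorm_sq]
          calc ∑ p : Fin K × Fin nw, (ws p.1 p.2) ^ 2
              = ∑ k ∈ Finset.range K, ∑ i, (ws k i) ^ 2 :=
                StmtAux.sq_sum_prod K ws
            _ ≤ 1 := hpart K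
        nlinarith [StmtAux.vecNorm_nonneg (fun c : Fin K × Fin nw => ws c.1 c.2)]
      have h1 : vecNorm ((liftD A B C D K).mulVec (fun c : Fin K × Fin nw => ws c.1 c.2))
          ≤ f K * vecNorm (fun c : Fin K × Fin nw => ws c.1 c.2) :=
        StmtAux.matPosNorm_mulVec_le _ _ hvK0
      have h2 : vecNorm ((liftD A B C D K).mulVec (fun c : Fin K × Fin nw => ws c.1 c.2))
          ≤ ⨆ N, f N := by
        refine le_trans h1 ?_
        calc f K * vecNorm (fun c : Fin K × Fin nw => ws c.1 c.2)
            ≤ f K * 1 := mul_le_mul_of_nonneg_left hvKle (StmtAux.matPosNorm_nonneg _)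
          _ = f K := mul_one _
          _ ≤ ⨆ N, f N := le_ciSup hbdd K
      exact pow_le_pow_left₀ (StmtAux.vecNorm_nonneg _) h2 2
    have htle : (∑' k, ∑ i, (ltiOutput A B C D ws k i) ^ 2) ≤ (⨆ N, f N) ^ 2 :=
      hbsum.tsum_le_of_sum_range_le hKb
    show Real.sqrt _ ≤ _
    calc Real.sqrt (∑' k, ∑ i, (ltiOutput A B C D ws k i) ^ 2)
        ≤ Real.sqrt ((⨆ N, f N) ^ 2) := Real.sqrt_le_sqrt htle
      _ = ⨆ N, f N := Real.sqrt_sq hL0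
  have hPeq : (⨆ N, f N) = posL2Gain A B C D := le_antisymm hle1 hle2
  exact ⟨hmono, hPeq ▸ htend⟩


end
end

section
/- Consider the RNN x(0) = 0, x(k+1) = Λ x(k) + W_in w(k) + v(k), z(k) = W_out x(k), w(k) = Φ(z(k) + s(k)), where Λ ∈ ℝ^{n×n} is Schur–Cohn stable, W_in ∈ ℝ^{n×m}, W_out ∈ ℝ^{m×n}, Φ is the ReLU, and s : ℕ → ℝ^m, v : ℕ → ℝ^n are external inputs. Let G₀ denote the discrete-time LTI system with matrices (Λ, W_in, W_out, 0). If ‖G₀‖_{2+} < 1, then the RNN is finite-gain l2 stable: there exists γ ≥ 0 such that for all inputs s, v and all τ ∈ ℕ, ‖z_τ‖_2² + ‖w_τ‖_2² ≤ γ² (‖s_τ‖_2² + ‖v_τ‖_2²). -/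
open Matrix

noncomputable section

/-- State of the RNN x(k+1) = Λ x(k) + W_in Φ(W_out x(k) + s(k)) + v(k), x(0) = 0,
where Φ is the ReLU. -/
def rnnState {n m : ℕ} (Λ : Matrix (Fin n) (Fin n) ℝ) (Win : Matrix (Fin n) (Fin m) ℝ)
    (Wout : Matrix (Fin m) (Fin n) ℝ) (s : ℕ → Fin m → ℝ) (v : ℕ → Fin n → ℝ) :
    ℕ → Fin n → ℝ
  | 0 => 0
  | k + 1 =>
      Λ.mulVec (rnnState Λ Win Wout s v k)
        + Win.mulVec (relu (Wout.mulVec (rnnState Λ Win Wout s v k) + s k)) + v k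

/-- Squared l2 norm of the truncation of a signal up to time instant τ. -/
def trNormSq {ι : Type*} [Fintype ι] (u : ℕ → ι → ℝ) (τ : ℕ) : ℝ :=
  ∑ k ∈ Finset.range (τ + 1), ∑ i, (u k i) ^ 2

section Stmt13Aux

open Finset

variable {ι κ ζ : Type*} [Fintype ι] [Fintype κ] [Fintype ζ]

/-- Frobenius norm of a real matrix. -/
def frobR (M : Matrix ι κ ℝ) : ℝ := Real.sqrt (∑ i, ∑ j, M i j ^ 2)

lemma frobR_nonneg (M : Matrix ι κ ℝ) : 0 ≤ frobR M := Real.sqrt_nonneg _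

lemma vecNorm_nonneg' (v : ι → ℝ) : 0 ≤ vecNorm v := Real.sqrt_nonneg _

lemma sq_vecNorm (v : ι → ℝ) : vecNorm v ^ 2 = ∑ i, v i ^ 2 :=
  Real.sq_sqrt (Finset.sum_nonneg fun i _ => sq_nonneg _)

lemma vecNorm_mulVec_le (M : Matrix ι κ ℝ) (x : κ → ℝ) :
    vecNorm (M.mulVec x) ≤ frobR M * vecNorm x := by
  rw [vecNorm, frobR, vecNorm, ← Real.sqrt_mul (by positivity)]
  apply Real.sqrt_le_sqrt
  rw [Finset.sum_mul]
  refine Finset.sum_le_sum fun i _ => ?_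
  have h1 : M.mulVec x i = ∑ j, M i j * x j := rfl
  rw [h1]
  exact Finset.sum_mul_sq_le_sq_mul_sq Finset.univ (fun j => M i j) x

lemma sum_sq_mulVec_chain_le (C : Matrix ζ ι ℝ) (Ad : Matrix ι ι ℝ) (B : Matrix ι κ ℝ)
    {r : ℝ} (hAd : frobR Ad ≤ r) (x : κ → ℝ) :
    ∑ i, (C.mulVec (Ad.mulVec (B.mulVec x)) i) ^ 2
      ≤ (frobR C * r * frobR B) ^ 2 * ∑ j, (x j) ^ 2 := by
  have hr : 0 ≤ r := le_trans (frobR_nonneg Ad) hAd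
  have h1 : vecNorm (C.mulVec (Ad.mulVec (B.mulVec x)))
      ≤ frobR C * r * frobR B * vecNorm x := by
    calc vecNorm (C.mulVec (Ad.mulVec (B.mulVec x)))
        ≤ frobR C * vecNorm (Ad.mulVec (B.mulVec x)) := vecNorm_mulVec_le _ _
      _ ≤ frobR C * (r * vecNorm (B.mulVec x)) := by
          refine mul_le_mul_of_nonneg_left ?_ (frobR_nonneg C)
          calc vecNorm (Ad.mulVec (B.mulVec x)) ≤ frobR Ad * vecNorm (B.mulVec x) :=
                vecNorm_mulVec_le _ _
            _ ≤ r * vecNorm (B.mulVec x) :=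
                mul_le_mul_of_nonneg_right hAd (vecNorm_nonneg' _)
      _ ≤ frobR C * (r * (frobR B * vecNorm x)) := by
          refine mul_le_mul_of_nonneg_left (mul_le_mul_of_nonneg_left ?_ hr) (frobR_nonneg C)
          exact vecNorm_mulVec_le _ _
      _ = frobR C * r * frobR B * vecNorm x := by ring
  have h2 := pow_le_pow_left₀ (vecNorm_nonneg' _) h1 2
  rw [sq_vecNorm, mul_pow, sq_vecNorm] at h2
  exact h2

lemma trNormSq_nonneg (u : ℕ → ι → ℝ) (τ : ℕ) : 0 ≤ trNormSq u τ :=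
  Finset.sum_nonneg fun _ _ => Finset.sum_nonneg fun _ _ => sq_nonneg _

/-- Truncated l2 norm. -/
def sN (u : ℕ → ι → ℝ) (τ : ℕ) : ℝ := Real.sqrt (trNormSq u τ)

lemma sN_nonneg (u : ℕ → ι → ℝ) (τ : ℕ) : 0 ≤ sN u τ := Real.sqrt_nonneg _

lemma sq_sN (u : ℕ → ι → ℝ) (τ : ℕ) : sN u τ ^ 2 = trNormSq u τ :=
  Real.sq_sqrt (trNormSq_nonneg u τ)

lemma trNormSq_congr {u u' : ℕ → ι → ℝ} {τ : ℕ} (h : ∀ k, k ≤ τ → ∀ i, u k i = u' k i) :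
    trNormSq u τ = trNormSq u' τ := by
  refine Finset.sum_congr rfl fun k hk => Finset.sum_congr rfl fun i _ => ?_
  rw [h k (by simpa using Nat.lt_succ_iff.mp (Finset.mem_range.mp hk))]

lemma trNormSq_eq_sum_prod (u : ℕ → ι → ℝ) (τ : ℕ) :
    trNormSq u τ = ∑ p : Fin (τ+1) × ι, (u p.1 p.2) ^ 2 := by
  rw [trNormSq, ← Fin.sum_univ_eq_sum_range (fun k => ∑ i, (u k i) ^ 2) (τ+1),
    Fintype.sum_prod_type]

lemma sN_eq_norm (u : ℕ → ι → ℝ) (τ : ℕ) :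
    sN u τ = ‖(WithLp.equiv 2 (Fin (τ+1) × ι → ℝ)).symm
      (fun p => u p.1 p.2)‖ := by
  rw [EuclideanSpace.norm_eq, sN, trNormSq_eq_sum_prod]
  congr 1
  refine Finset.sum_congr rfl fun p _ => ?_
  rw [WithLp.equiv_symm_apply, PiLp.toLp_apply, Real.norm_eq_abs, sq_abs]

lemma sN_add_le (u v : ℕ → ι → ℝ) (τ : ℕ) :
    sN (fun k => u k + v k) τ ≤ sN u τ + sN v τ := by
  have h := norm_add_le ((WithLp.equiv 2 (Fin (τ+1) × ι → ℝ)).symm (fun p => u p.1 p.2))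
    ((WithLp.equiv 2 (Fin (τ+1) × ι → ℝ)).symm (fun p => v p.1 p.2))
  rw [← sN_eq_norm, ← sN_eq_norm, ← WithLp.toLp_add] at h
  refine le_trans (le_of_eq ?_) h
  rw [sN_eq_norm]
  congr 1

lemma sN_mono {u u' : ℕ → ι → ℝ} (τ : ℕ) (h : ∀ k i, (u k i) ^ 2 ≤ (u' k i) ^ 2) :
    sN u τ ≤ sN u' τ := by
  apply Real.sqrt_le_sqrt
  exact Finset.sum_le_sum fun k _ => Finset.sum_le_sum fun i _ => h k i

lemma sN_sum_le {σ : Type*} (s : Finset σ) (F : σ → ℕ → ι → ℝ) (τ : ℕ) :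
    sN (fun k i => ∑ d ∈ s, F d k i) τ ≤ ∑ d ∈ s, sN (F d) τ := by
  classical
  induction s using Finset.induction_on with
  | empty =>
      simp only [Finset.sum_empty]
      have : sN (fun (_ : ℕ) (_ : ι) => (0:ℝ)) τ = 0 := by
        simp [sN, trNormSq]
      exact le_of_eq this
  | insert a s' hnotmem ih =>
      rw [Finset.sum_insert hnotmem]
      have h1 : sN (fun k i => ∑ d ∈ insert a s', F d k i) τ
          = sN (fun k => F a k + fun i => ∑ d ∈ s', F d k i) τ := by
        unfold sN
        congr 1
        refine trNormSq_congr fun k _ i => ?_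
        simp [Finset.sum_insert hnotmem]
      rw [h1]
      exact le_trans (sN_add_le _ _ τ) (by gcongr)

attribute [local instance] Matrix.frobeniusSeminormedAddCommGroup
  Matrix.frobeniusNormedAddCommGroup Matrix.frobeniusNormedRing
  Matrix.frobeniusNormedSpace Matrix.frobeniusNormedAlgebra

open scoped ENNReal NNReal in
lemma schur_decay {N : ℕ} {Λ : Matrix (Fin N) (Fin N) ℝ} (h : SchurStable Λ) :
    ∃ c ρ : ℝ, 0 ≤ c ∧ 0 ≤ ρ ∧ ρ < 1 ∧ ∀ k : ℕ, frobR (Λ ^ k) ≤ c * ρ ^ k := by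
  set M := Λ.map (algebraMap ℝ ℂ) with hMdef
  have hM : ∀ k : ℕ, ‖M ^ k‖ = frobR (Λ ^ k) := by
    intro k
    have h1 : M ^ k = (Λ ^ k).map (algebraMap ℝ ℂ) := by
      rw [hMdef, ← RingHom.mapMatrix_apply, ← RingHom.mapMatrix_apply, ← map_pow]
    rw [h1, Matrix.frobenius_norm_map_eq (Λ ^ k) (algebraMap ℝ ℂ)
      (fun a => by simp [Complex.norm_real])]
    rw [Matrix.frobenius_norm_def, frobR, Real.sqrt_eq_rpow]
    congr 1
    refine Finset.sum_congr rfl fun i _ => Finset.sum_congr rfl fun j _ => ?_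
    rw [Real.rpow_two, Real.norm_eq_abs, sq_abs]
  have hr1 : spectralRadius ℂ M < 1 := h
  have hrtop : spectralRadius ℂ M ≠ ⊤ := ne_top_of_lt hr1
  have hrlt : (spectralRadius ℂ M).toReal < 1 := by
    have := (ENNReal.toReal_lt_toReal hrtop (by simp)).mpr hr1
    simpa using this
  have hrnn : 0 ≤ (spectralRadius ℂ M).toReal := ENNReal.toReal_nonneg
  set ρ : ℝ := ((spectralRadius ℂ M).toReal + 1) / 2 with hρdef
  have hρpos : 0 < ρ := by simp only [hρdef]; linarith
  have hρ1 : ρ < 1 := by simp only [hρdef]; linarith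
  have hrρ : spectralRadius ℂ M < ENNReal.ofReal ρ := by
    rw [ENNReal.lt_ofReal_iff_toReal_lt hrtop]
    simp only [hρdef]; linarith
  have hT := spectrum.pow_nnnorm_pow_one_div_tendsto_nhds_spectralRadius M
  have hev := hT.eventually_lt_const hrρ
  obtain ⟨K0, hK0⟩ := Filter.eventually_atTop.mp hev
  have hbig : ∀ k, max K0 1 ≤ k → ‖M ^ k‖ ≤ ρ ^ k := by
    intro k hk
    have hk1 : 1 ≤ k := le_trans (le_max_right _ _) hk
    have hkne : (k : ℝ) ≠ 0 := Nat.cast_ne_zero.mpr (by omega)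
    have h1 : (‖M ^ k‖₊ : ℝ≥0∞) ^ (1 / (k:ℝ)) < ENNReal.ofReal ρ :=
      hK0 k (le_trans (le_max_left _ _) hk)
    have h2 : ((‖M ^ k‖₊ : ℝ≥0∞) ^ (1 / (k:ℝ))) ^ (k:ℝ)
        ≤ (ENNReal.ofReal ρ) ^ (k:ℝ) :=
      ENNReal.rpow_le_rpow h1.le (Nat.cast_nonneg k)
    rw [← ENNReal.rpow_mul, one_div_mul_cancel hkne, ENNReal.rpow_one] at h2
    rw [ENNReal.ofReal_rpow_of_pos hρpos, Real.rpow_natCast] at h2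
    have h3 : ‖M ^ k‖ ≤ ρ ^ k := by
      have := ENNReal.toReal_mono (by simp) h2
      simpa [ENNReal.toReal_ofReal (le_of_lt (pow_pos hρpos k))] using this
    exact h3
  refine ⟨(∑ j ∈ Finset.range (max K0 1), ‖M ^ j‖ / ρ ^ j) + 1, ρ, by positivity,
    le_of_lt hρpos, hρ1, ?_⟩
  intro k
  rw [← hM k]
  have hsum0 : 0 ≤ ∑ j ∈ Finset.range (max K0 1), ‖M ^ j‖ / ρ ^ j :=
    Finset.sum_nonneg fun j _ => div_nonneg (norm_nonneg _) (le_of_lt (pow_pos hρpos j))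
  rcases le_or_gt (max K0 1) k with hk | hk
  · have h1 := hbig k hk
    nlinarith [pow_pos hρpos k]
  · have hmem : k ∈ Finset.range (max K0 1) := Finset.mem_range.mpr hk
    have h1 : ‖M ^ k‖ / ρ ^ k ≤ ∑ j ∈ Finset.range (max K0 1), ‖M ^ j‖ / ρ ^ j :=
      Finset.single_le_sum (fun j _ => div_nonneg (norm_nonneg _) (le_of_lt (pow_pos hρpos j)))
        hmem
    have hpow : (0:ℝ) < ρ ^ k := pow_pos hρpos k
    rw [div_le_iff₀ hpow] at h1
    nlinarith

section LTI

open Finset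

variable {nn ww zz : Type*} [Fintype nn] [Fintype ww] [Fintype zz] [DecidableEq nn]

lemma ltiState_eq_sum (A : Matrix nn nn ℝ) (B : Matrix nn ww ℝ) (u : ℕ → ww → ℝ) (k : ℕ) :
    ltiState A B u k = ∑ j ∈ Finset.range k, (A ^ (k - 1 - j)).mulVec (B.mulVec (u j)) := by
  induction k with
  | zero => simp [ltiState]
  | succ k ih =>
      rw [ltiState, ih, Finset.sum_range_succ]
      congr 1
      · have hmap : A.mulVec (∑ j ∈ Finset.range k, (A ^ (k - 1 - j)).mulVec (B.mulVec (u j)))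
            = ∑ j ∈ Finset.range k, A.mulVec ((A ^ (k - 1 - j)).mulVec (B.mulVec (u j))) := by
          have h0 := map_sum A.mulVecLin
            (fun j => (A ^ (k - 1 - j)).mulVec (B.mulVec (u j))) (Finset.range k)
          simp only [Matrix.mulVecLin_apply] at h0
          exact h0
        rw [hmap]
        refine Finset.sum_congr rfl fun j hj => ?_
        have hj' : j < k := Finset.mem_range.mp hj
        rw [Matrix.mulVec_mulVec]
        have he : k + 1 - 1 - j = (k - 1 - j) + 1 := by omega
        rw [he, pow_succ']
      · have : k + 1 - 1 - k = 0 := by omega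
        rw [this, pow_zero, Matrix.one_mulVec]

lemma ltiState_congr (A : Matrix nn nn ℝ) (B : Matrix nn ww ℝ) {u u' : ℕ → ww → ℝ} (k : ℕ)
    (h : ∀ j, j < k → u j = u' j) : ltiState A B u k = ltiState A B u' k := by
  induction k with
  | zero => rfl
  | succ k ih =>
      rw [ltiState, ltiState, ih (fun j hj => h j (Nat.lt_succ_of_lt hj)),
        h k (Nat.lt_succ_self k)]

lemma ltiState_zero_input (A : Matrix nn nn ℝ) (B : Matrix nn ww ℝ) {u : ℕ → ww → ℝ} (k : ℕ)
    (h : ∀ j, j < k → u j = 0) : ltiState A B u k = 0 := by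
  induction k with
  | zero => rfl
  | succ k ih =>
      rw [ltiState, ih (fun j hj => h j (Nat.lt_succ_of_lt hj)), h k (Nat.lt_succ_self k)]
      simp [Matrix.mulVec_zero]

lemma ltiState_smul (A : Matrix nn nn ℝ) (B : Matrix nn ww ℝ) (a : ℝ) (u : ℕ → ww → ℝ) (k : ℕ) :
    ltiState A B (fun j => a • u j) k = a • ltiState A B u k := by
  induction k with
  | zero => simp [ltiState]
  | succ k ih => rw [ltiState, ltiState, ih, Matrix.mulVec_smul, Matrix.mulVec_smul, smul_add]

lemma ltiOutput_D0 (A : Matrix nn nn ℝ) (B : Matrix nn ww ℝ) (C : Matrix zz nn ℝ)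
    (u : ℕ → ww → ℝ) (k : ℕ) :
    ltiOutput A B C 0 u k = C.mulVec (ltiState A B u k) := by
  rw [ltiOutput, Matrix.zero_mulVec, add_zero]

lemma geom_sum_le' {ρ : ℝ} (h0 : 0 ≤ ρ) (h1 : ρ < 1) (K : ℕ) :
    ∑ d ∈ Finset.range K, ρ ^ d ≤ (1 - ρ)⁻¹ := by
  rw [← tsum_geometric_of_lt_one h0 h1]
  exact Summable.sum_le_tsum (Finset.range K) (fun i _ => pow_nonneg h0 i)
    (summable_geometric_of_lt_one h0 h1)

lemma trunc_gain (A : Matrix nn nn ℝ) (B : Matrix nn ww ℝ) (C : Matrix zz nn ℝ)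
    {c ρ : ℝ} (hc : 0 ≤ c) (hρ0 : 0 ≤ ρ) (hρ1 : ρ < 1)
    (hd : ∀ k, frobR (A ^ k) ≤ c * ρ ^ k) (u : ℕ → ww → ℝ) (τ : ℕ) :
    sN (ltiOutput A B C 0 u) τ
      ≤ (frobR C * c * frobR B * (1 - ρ)⁻¹) * sN u τ := by
  classical
  set g : ℝ := frobR C * c * frobR B with hgdef
  have hg0 : 0 ≤ g := by
    have := frobR_nonneg C; have := frobR_nonneg B; positivity
  set F : ℕ → ℕ → zz → ℝ := fun d k i =>
    if d < k then (C.mulVec ((A ^ d).mulVec (B.mulVec (u (k - 1 - d))))) i else 0 with hFdef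
  -- the output agrees with the sum of the delayed components up to time τ
  have hout : ∀ k, k ≤ τ → ∀ i,
      ltiOutput A B C 0 u k i = ∑ d ∈ Finset.range (τ+1), F d k i := by
    intro k hk i
    have h1 : ltiOutput A B C 0 u k i
        = ∑ j ∈ Finset.range k, (C.mulVec ((A ^ (k - 1 - j)).mulVec (B.mulVec (u j)))) i := by
      rw [ltiOutput_D0, ltiState_eq_sum]
      have := map_sum C.mulVecLin
        (fun j => (A ^ (k - 1 - j)).mulVec (B.mulVec (u j))) (Finset.range k)
      simp only [Matrix.mulVecLin_apply] at this
      rw [this, Finset.sum_apply]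
    rw [h1]
    have h2 : ∑ d ∈ Finset.range (τ+1), F d k i = ∑ d ∈ Finset.range k, F d k i := by
      refine (Finset.sum_subset (Finset.range_subset_range.mpr (by omega)) ?_).symm
      intro d _ hd'
      have : ¬ d < k := fun hlt => hd' (Finset.mem_range.mpr hlt)
      simp [hFdef, this]
    rw [h2]
    have h3 : ∑ d ∈ Finset.range k, F d k i
        = ∑ d ∈ Finset.range k, (C.mulVec ((A ^ d).mulVec (B.mulVec (u (k - 1 - d))))) i := by
      refine Finset.sum_congr rfl fun d hd' => ?_
      have : d < k := Finset.mem_range.mp hd'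
      simp [hFdef, this]
    rw [h3]
    rw [← Finset.sum_range_reflect
      (fun d => (C.mulVec ((A ^ d).mulVec (B.mulVec (u (k - 1 - d))))) i) k]
    refine Finset.sum_congr rfl fun j hj => ?_
    have hj' : j < k := Finset.mem_range.mp hj
    have he : k - 1 - (k - 1 - j) = j := by omega
    rw [he]
  -- bound each delayed component
  have hF : ∀ d, sN (F d) τ ≤ g * ρ ^ d * sN u τ := by
    intro d
    have hb : trNormSq (F d) τ ≤ (g * ρ ^ d) ^ 2 * trNormSq u τ := by
      have hterm : ∀ k, ∑ i, (F d k i) ^ 2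
          ≤ if d < k then (g * ρ ^ d) ^ 2 * (∑ j, (u (k - 1 - d) j) ^ 2) else 0 := by
        intro k
        by_cases hdk : d < k
        · simp only [hFdef, hdk, if_true]
          have := sum_sq_mulVec_chain_le C (A ^ d) B (hd d) (u (k - 1 - d))
          calc ∑ i, (C.mulVec ((A ^ d).mulVec (B.mulVec (u (k - 1 - d)))) i) ^ 2
              ≤ (frobR C * (c * ρ ^ d) * frobR B) ^ 2 * ∑ j, (u (k - 1 - d) j) ^ 2 := this
            _ = (g * ρ ^ d) ^ 2 * ∑ j, (u (k - 1 - d) j) ^ 2 := by rw [hgdef]; ring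
        · simp [hFdef, hdk]
      have h4 : trNormSq (F d) τ
          ≤ ∑ k ∈ Finset.range (τ+1),
              (if d < k then (g * ρ ^ d) ^ 2 * (∑ j, (u (k - 1 - d) j) ^ 2) else 0) := by
        exact Finset.sum_le_sum fun k _ => hterm k
      have h5 : ∑ k ∈ Finset.range (τ+1),
            (if d < k then (g * ρ ^ d) ^ 2 * (∑ j, (u (k - 1 - d) j) ^ 2) else 0)
          ≤ (g * ρ ^ d) ^ 2 * trNormSq u τ := by
        rw [trNormSq, Finset.mul_sum]
        have h6 : ∑ k ∈ Finset.range (τ+1),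
              (if d < k then (g * ρ ^ d) ^ 2 * (∑ j, (u (k - 1 - d) j) ^ 2) else 0)
            = ∑ k ∈ Finset.Ico (d+1) (τ+1), (g * ρ ^ d) ^ 2 * (∑ j, (u (k - 1 - d) j) ^ 2) := by
          rw [← Finset.sum_filter]
          congr 1
          ext k
          simp only [Finset.mem_filter, Finset.mem_range, Finset.mem_Ico]
          omega
        rw [h6, Finset.sum_Ico_eq_sum_range]
        have h7 : ∀ i0 ∈ Finset.range (τ + 1 - (d + 1)),
            (g * ρ ^ d) ^ 2 * (∑ j, (u (d + 1 + i0 - 1 - d) j) ^ 2)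
            = (g * ρ ^ d) ^ 2 * (∑ j, (u i0 j) ^ 2) := by
          intro i0 _
          have he : d + 1 + i0 - 1 - d = i0 := by omega
          rw [he]
        rw [Finset.sum_congr rfl h7]
        refine Finset.sum_le_sum_of_subset_of_nonneg
          (Finset.range_subset_range.mpr (by omega)) ?_
        intro k _ _
        positivity
      exact le_trans h4 h5
    have := Real.sqrt_le_sqrt hb
    rw [← sN] at this
    refine le_trans this (le_of_eq ?_)
    rw [Real.sqrt_mul (sq_nonneg _), Real.sqrt_sq (by positivity), ← sN]
  -- assemble
  have heq : sN (ltiOutput A B C 0 u) τ = sN (fun k i => ∑ d ∈ Finset.range (τ+1), F d k i) τ := by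
    unfold sN
    congr 1
    exact trNormSq_congr fun k hk i => hout k hk i
  rw [heq]
  calc sN (fun k i => ∑ d ∈ Finset.range (τ+1), F d k i) τ
      ≤ ∑ d ∈ Finset.range (τ+1), sN (F d) τ := sN_sum_le _ F τ
    _ ≤ ∑ d ∈ Finset.range (τ+1), g * ρ ^ d * sN u τ := Finset.sum_le_sum fun d _ => hF d
    _ = g * (∑ d ∈ Finset.range (τ+1), ρ ^ d) * sN u τ := by
        rw [Finset.mul_sum, Finset.sum_mul]
    _ ≤ g * (1 - ρ)⁻¹ * sN u τ := by
        have hgs := geom_sum_le' hρ0 hρ1 (τ+1)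
        exact mul_le_mul_of_nonneg_right (mul_le_mul_of_nonneg_left hgs hg0) (sN_nonneg u τ)
    _ = (frobR C * c * frobR B * (1 - ρ)⁻¹) * sN u τ := by rw [hgdef]

end LTI

section Gain

open Finset

variable {nn ww zz : Type*} [Fintype nn] [Fintype ww] [Fintype zz] [DecidableEq nn]

lemma gain_set_bdd (A : Matrix nn nn ℝ) (B : Matrix nn ww ℝ) (C : Matrix zz nn ℝ)
    {g0 : ℝ} (hg0 : 0 ≤ g0)
    (htr : ∀ u τ, sN (ltiOutput A B C (0 : Matrix zz ww ℝ) u) τ ≤ g0 * sN u τ) :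
    ∀ x ∈ {c : ℝ | ∃ ws : ℕ → ww → ℝ, (∀ k i, 0 ≤ ws k i) ∧
      Summable (fun k => ∑ i, (ws k i) ^ 2) ∧ sigNorm ws = 1 ∧
      c = sigNorm (ltiOutput A B C (0 : Matrix zz ww ℝ) ws)}, x ≤ g0 := by
  rintro x ⟨ws, hpos, hsum, hnorm1, rfl⟩
  have houtk : ∀ τ, trNormSq (ltiOutput A B C (0 : Matrix zz ww ℝ) ws) τ ≤ g0 ^ 2 := by
    intro τ
    have h1 : sN ws τ ≤ 1 := by
      have h2 : trNormSq ws τ ≤ ∑' k, ∑ i, (ws k i) ^ 2 :=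
        Summable.sum_le_tsum (Finset.range (τ+1))
          (fun k _ => Finset.sum_nonneg fun i _ => sq_nonneg _) hsum
      have h3 : sN ws τ ≤ Real.sqrt (∑' k, ∑ i, (ws k i) ^ 2) := Real.sqrt_le_sqrt h2
      rwa [← sigNorm, hnorm1] at h3
    have h4 : sN (ltiOutput A B C (0 : Matrix zz ww ℝ) ws) τ ≤ g0 := by
      calc sN (ltiOutput A B C (0 : Matrix zz ww ℝ) ws) τ ≤ g0 * sN ws τ := htr ws τ
        _ ≤ g0 * 1 := mul_le_mul_of_nonneg_left h1 hg0
        _ = g0 := mul_one g0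
    have h5 := pow_le_pow_left₀ (sN_nonneg _ τ) h4 2
    rwa [sq_sN] at h5
  have htsum : (∑' k, ∑ i, (ltiOutput A B C (0 : Matrix zz ww ℝ) ws k i) ^ 2) ≤ g0 ^ 2 := by
    refine Real.tsum_le_of_sum_range_le
      (fun k => Finset.sum_nonneg fun i _ => sq_nonneg _) fun n' => ?_
    cases n' with
    | zero => simpa using sq_nonneg g0
    | succ τ => exact houtk τ
  calc sigNorm (ltiOutput A B C (0 : Matrix zz ww ℝ) ws)
      ≤ Real.sqrt (g0 ^ 2) := Real.sqrt_le_sqrt htsum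
    _ = g0 := Real.sqrt_sq hg0

lemma posL2Gain_trunc (A : Matrix nn nn ℝ) (B : Matrix nn ww ℝ) (C : Matrix zz nn ℝ)
    {g0 : ℝ} (hg0 : 0 ≤ g0)
    (htr : ∀ u τ, sN (ltiOutput A B C (0 : Matrix zz ww ℝ) u) τ ≤ g0 * sN u τ)
    (w : ℕ → ww → ℝ) (hw : ∀ k i, 0 ≤ w k i) (τ : ℕ) :
    sN (ltiOutput A B C (0 : Matrix zz ww ℝ) w) τ
      ≤ max (posL2Gain A B C (0 : Matrix zz ww ℝ)) 0 * sN w τ := by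
  classical
  set ρ' := max (posL2Gain A B C (0 : Matrix zz ww ℝ)) 0 with hρ'def
  have hρ'0 : (0:ℝ) ≤ ρ' := le_max_right _ _
  set w' : ℕ → ww → ℝ := fun k => if k ≤ τ then w k else 0 with hw'def
  have hwstate : ∀ k, k ≤ τ →
      ltiOutput A B C (0 : Matrix zz ww ℝ) w' k = ltiOutput A B C 0 w k := by
    intro k hk
    rw [ltiOutput_D0, ltiOutput_D0, ltiState_congr A B k (fun j hj => ?_)]
    have : j ≤ τ := by omega
    simp [hw'def, this]
  have htr_eq : trNormSq (ltiOutput A B C (0 : Matrix zz ww ℝ) w) τ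
      = trNormSq (ltiOutput A B C (0 : Matrix zz ww ℝ) w') τ :=
    trNormSq_congr fun k hk i => by rw [hwstate k hk]
  set f' : ℕ → ℝ := fun k => ∑ i, (w' k i) ^ 2 with hf'def
  have hf'0 : ∀ k, 0 ≤ f' k := fun k => Finset.sum_nonneg fun i _ => sq_nonneg _
  have hf'van : ∀ k ∉ Finset.range (τ+1), f' k = 0 := by
    intro k hk
    have hk' : ¬ k ≤ τ := by simpa [Nat.lt_succ_iff] using hk
    simp [hf'def, hw'def, hk']
  have hsum' : Summable f' := summable_of_ne_finset_zero hf'van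
  have htsum' : (∑' k, f' k) = trNormSq w τ := by
    rw [tsum_eq_sum hf'van]
    refine Finset.sum_congr rfl fun k hk => Finset.sum_congr rfl fun i _ => ?_
    have : k ≤ τ := Nat.lt_succ_iff.mp (Finset.mem_range.mp hk)
    simp [hf'def, hw'def, this]
  rcases eq_or_lt_of_le (trNormSq_nonneg w τ) with h0 | hpos
  · -- the truncated input is zero
    have hzero : ∀ k, k ≤ τ → ∀ i, w k i = 0 := by
      intro k hk i
      have h1 := (Finset.sum_eq_zero_iff_of_nonneg
        (fun k _ => Finset.sum_nonneg fun i _ => sq_nonneg ((w k i)))).mp h0.symm k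
        (Finset.mem_range.mpr (by omega))
      have h2 := (Finset.sum_eq_zero_iff_of_nonneg (fun i _ => sq_nonneg (w k i))).mp h1 i
        (Finset.mem_univ i)
      exact pow_eq_zero_iff two_ne_zero |>.mp h2
    have hW'0 : ∀ j, w' j = 0 := by
      intro j
      funext i
      by_cases hj : j ≤ τ
      · simp [hw'def, hj, hzero j hj i]
      · simp [hw'def, hj]
    have hout0 : ∀ k, ltiOutput A B C (0 : Matrix zz ww ℝ) w' k = 0 := by
      intro k
      rw [ltiOutput_D0, ltiState_zero_input A B k (fun j _ => hW'0 j), Matrix.mulVec_zero]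
    have h2 : trNormSq (ltiOutput A B C (0 : Matrix zz ww ℝ) w') τ = 0 := by
      rw [trNormSq]
      refine Finset.sum_eq_zero fun k _ => Finset.sum_eq_zero fun i _ => ?_
      rw [hout0 k]
      simp
    have h3 : sN (ltiOutput A B C (0 : Matrix zz ww ℝ) w) τ = 0 := by
      rw [sN, htr_eq, h2, Real.sqrt_zero]
    rw [h3]
    exact mul_nonneg hρ'0 (sN_nonneg w τ)
  · set t := trNormSq w τ with htdef
    set α := Real.sqrt t with hαdef
    have hα : 0 < α := Real.sqrt_pos.mpr hpos
    have hα2 : α ^ 2 = t := Real.sq_sqrt hpos.le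
    set w'' : ℕ → ww → ℝ := fun k => α⁻¹ • w' k with hw''def
    have happ : ∀ k i, w'' k i = α⁻¹ * w' k i := fun k i => rfl
    have hnn'' : ∀ k i, 0 ≤ w'' k i := by
      intro k i
      rw [happ]
      refine mul_nonneg (inv_nonneg.mpr hα.le) ?_
      by_cases hk : k ≤ τ
      · simp [hw'def, hk]; exact hw k i
      · simp [hw'def, hk]
    have hf'' : ∀ k, (∑ i, (w'' k i) ^ 2) = (α⁻¹) ^ 2 * f' k := by
      intro k
      rw [hf'def, Finset.mul_sum]
      refine Finset.sum_congr rfl fun i _ => ?_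
      rw [happ, mul_pow]
    have hsum'' : Summable (fun k => ∑ i, (w'' k i) ^ 2) := by
      refine Summable.congr (hsum'.mul_left ((α⁻¹) ^ 2)) fun k => (hf'' k).symm
    have hnorm'' : sigNorm w'' = 1 := by
      rw [sigNorm, tsum_congr hf'', tsum_mul_left, htsum', ← hα2]
      rw [show (α⁻¹) ^ 2 * α ^ 2 = 1 by field_simp]
      exact Real.sqrt_one
    have hmem : sigNorm (ltiOutput A B C (0 : Matrix zz ww ℝ) w'')
        ∈ {c : ℝ | ∃ ws : ℕ → ww → ℝ, (∀ k i, 0 ≤ ws k i) ∧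
          Summable (fun k => ∑ i, (ws k i) ^ 2) ∧ sigNorm ws = 1 ∧
          c = sigNorm (ltiOutput A B C (0 : Matrix zz ww ℝ) ws)} :=
      ⟨w'', hnn'', hsum'', hnorm'', rfl⟩
    have hbdd : BddAbove {c : ℝ | ∃ ws : ℕ → ww → ℝ, (∀ k i, 0 ≤ ws k i) ∧
        Summable (fun k => ∑ i, (ws k i) ^ 2) ∧ sigNorm ws = 1 ∧
        c = sigNorm (ltiOutput A B C (0 : Matrix zz ww ℝ) ws)} :=
      ⟨g0, fun x hx => gain_set_bdd A B C hg0 htr x hx⟩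
    have hcle : sigNorm (ltiOutput A B C (0 : Matrix zz ww ℝ) w'') ≤ ρ' :=
      le_trans (le_csSup hbdd hmem) (le_max_left _ _)
    have hout'' : ∀ k, ltiOutput A B C (0 : Matrix zz ww ℝ) w'' k
        = α⁻¹ • ltiOutput A B C (0 : Matrix zz ww ℝ) w' k := by
      intro k
      rw [ltiOutput_D0, ltiOutput_D0, ltiState_smul A B α⁻¹ w' k, Matrix.mulVec_smul]
    set fo : ℕ → ℝ := fun k => ∑ i, (ltiOutput A B C (0 : Matrix zz ww ℝ) w' k i) ^ 2
      with hfodef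
    have hfo0 : ∀ k, 0 ≤ fo k := fun k => Finset.sum_nonneg fun i _ => sq_nonneg _
    have hfobd : ∀ n', ∑ k ∈ Finset.range n', fo k ≤ (g0 * α) ^ 2 := by
      intro n'
      cases n' with
      | zero => simpa using sq_nonneg (g0 * α)
      | succ τ' =>
          have h1 : ∑ k ∈ Finset.range (τ'+1), fo k
              = trNormSq (ltiOutput A B C (0 : Matrix zz ww ℝ) w') τ' := rfl
          rw [h1]
          have h2 : sN w' τ' ≤ α := by
            have h3 : trNormSq w' τ' ≤ ∑' k, f' k :=
              Summable.sum_le_tsum (Finset.range (τ'+1)) (fun k _ => hf'0 k) hsum'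
            have h4 := Real.sqrt_le_sqrt h3
            rw [htsum'] at h4
            exact h4
          have h5 : sN (ltiOutput A B C (0 : Matrix zz ww ℝ) w') τ' ≤ g0 * α :=
            le_trans (htr w' τ') (mul_le_mul_of_nonneg_left h2 hg0)
          have h6 := pow_le_pow_left₀ (sN_nonneg _ τ') h5 2
          rwa [sq_sN] at h6
    have hsumfo : Summable fo := summable_of_sum_range_le hfo0 hfobd
    have h2 : sigNorm (ltiOutput A B C (0 : Matrix zz ww ℝ) w'')
        = α⁻¹ * Real.sqrt (∑' k, fo k) := by
      rw [sigNorm]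
      have h3 : ∀ k, (∑ i, (ltiOutput A B C (0 : Matrix zz ww ℝ) w'' k i) ^ 2)
          = (α⁻¹) ^ 2 * fo k := by
        intro k
        rw [hfodef, Finset.mul_sum]
        refine Finset.sum_congr rfl fun i _ => ?_
        rw [hout'']
        rw [show (α⁻¹ • ltiOutput A B C (0 : Matrix zz ww ℝ) w' k) i
          = α⁻¹ * ltiOutput A B C (0 : Matrix zz ww ℝ) w' k i from rfl, mul_pow]
      rw [tsum_congr h3, tsum_mul_left, Real.sqrt_mul (sq_nonneg _),
        Real.sqrt_sq (inv_nonneg.mpr hα.le)]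
    have h3 : Real.sqrt (∑' k, fo k) ≤ α * ρ' := by
      have h4 := hcle
      rw [h2] at h4
      have h5 := mul_le_mul_of_nonneg_left h4 hα.le
      rwa [← mul_assoc, mul_inv_cancel₀ hα.ne', one_mul] at h5
    have h4 : trNormSq (ltiOutput A B C (0 : Matrix zz ww ℝ) w') τ ≤ ∑' k, fo k :=
      Summable.sum_le_tsum (Finset.range (τ+1)) (fun k _ => hfo0 k) hsumfo
    calc sN (ltiOutput A B C (0 : Matrix zz ww ℝ) w) τ
        = Real.sqrt (trNormSq (ltiOutput A B C (0 : Matrix zz ww ℝ) w') τ) := by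
          rw [sN, htr_eq]
      _ ≤ Real.sqrt (∑' k, fo k) := Real.sqrt_le_sqrt h4
      _ ≤ α * ρ' := h3
      _ = ρ' * sN w τ := by rw [sN, ← htdef, ← hαdef, mul_comm]

end Gain

lemma relu_sq_le (a : ℝ) : (max a 0) ^ 2 ≤ a ^ 2 := by
  rcases le_total a 0 with h | h
  · rw [max_eq_right h]
    simpa using sq_nonneg a
  · rw [max_eq_left h]

lemma rnn_superposition {n m : ℕ} (Λ : Matrix (Fin n) (Fin n) ℝ)
    (Win : Matrix (Fin n) (Fin m) ℝ) (Wout : Matrix (Fin m) (Fin n) ℝ)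
    (s : ℕ → Fin m → ℝ) (v : ℕ → Fin n → ℝ) (k : ℕ) :
    rnnState Λ Win Wout s v k =
      ltiState Λ Win (fun j => relu (Wout.mulVec (rnnState Λ Win Wout s v j) + s j)) k
        + ltiState Λ (1 : Matrix (Fin n) (Fin n) ℝ) v k := by
  induction k with
  | zero => simp [rnnState, ltiState]
  | succ k ih =>
      show Λ.mulVec (rnnState Λ Win Wout s v k)
          + Win.mulVec (relu (Wout.mulVec (rnnState Λ Win Wout s v k) + s k)) + v k = _
      rw [ltiState, ltiState, ih, Matrix.mulVec_add, Matrix.one_mulVec]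
      abel

end Stmt13Aux


set_option maxHeartbeats 1600000 in
/-- small-gain stability condition for the RNN with ReLU activation.
Here z(k) = W_out x(k) and w(k) = Φ(z(k) + s(k)). -/
theorem stmt_13 (n m : ℕ) (Λ : Matrix (Fin n) (Fin n) ℝ)
    (Win : Matrix (Fin n) (Fin m) ℝ) (Wout : Matrix (Fin m) (Fin n) ℝ)
    (hΛ : SchurStable Λ)
    (hgain : posL2Gain Λ Win Wout (0 : Matrix (Fin m) (Fin m) ℝ) < 1) :
    ∃ γ : ℝ, 0 ≤ γ ∧ ∀ (s : ℕ → Fin m → ℝ) (v : ℕ → Fin n → ℝ) (τ : ℕ),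
      trNormSq (fun k => Wout.mulVec (rnnState Λ Win Wout s v k)) τ
        + trNormSq (fun k => relu (Wout.mulVec (rnnState Λ Win Wout s v k) + s k)) τ
      ≤ γ ^ 2 * (trNormSq s τ + trNormSq v τ) := by
  obtain ⟨c, ρg, hc0, hρg0, hρg1, hdecay⟩ := schur_decay hΛ
  have hinv : (0:ℝ) ≤ (1 - ρg)⁻¹ := inv_nonneg.mpr (by linarith)
  set g0 : ℝ := frobR Wout * c * frobR Win * (1 - ρg)⁻¹ with hg0def
  set g1 : ℝ := frobR Wout * c * frobR (1 : Matrix (Fin n) (Fin n) ℝ) * (1 - ρg)⁻¹ with hg1def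
  have hg00 : 0 ≤ g0 := by
    have h1 := frobR_nonneg Wout
    have h2 := frobR_nonneg Win
    rw [hg0def]
    positivity
  have hg10 : 0 ≤ g1 := by
    have h1 := frobR_nonneg Wout
    have h2 := frobR_nonneg (1 : Matrix (Fin n) (Fin n) ℝ)
    rw [hg1def]
    positivity
  have htr0 : ∀ u τ, sN (ltiOutput Λ Win Wout (0 : Matrix (Fin m) (Fin m) ℝ) u) τ
      ≤ g0 * sN u τ := fun u τ => trunc_gain Λ Win Wout hc0 hρg0 hρg1 hdecay u τ
  have htr1 : ∀ u τ, sN (ltiOutput Λ (1 : Matrix (Fin n) (Fin n) ℝ) Wout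
      (0 : Matrix (Fin m) (Fin n) ℝ) u) τ ≤ g1 * sN u τ :=
    fun u τ => trunc_gain Λ (1 : Matrix (Fin n) (Fin n) ℝ) Wout hc0 hρg0 hρg1 hdecay u τ
  set ρ' := max (posL2Gain Λ Win Wout (0 : Matrix (Fin m) (Fin m) ℝ)) 0 with hρ'def
  have hρ'0 : (0:ℝ) ≤ ρ' := le_max_right _ _
  have hρ'1 : ρ' < 1 := max_lt hgain one_pos
  have h1ρ : (0:ℝ) < 1 - ρ' := by linarith
  set K : ℝ := (ρ' + g1) / (1 - ρ') with hKdef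
  have hK0 : 0 ≤ K := div_nonneg (by linarith) h1ρ.le
  refine ⟨Real.sqrt (2 * (K^2 + (K+1)^2)), Real.sqrt_nonneg _, ?_⟩
  intro s v τ
  have hγ2 : Real.sqrt (2 * (K^2 + (K+1)^2)) ^ 2 = 2 * (K^2 + (K+1)^2) :=
    Real.sq_sqrt (by positivity)
  rw [hγ2]
  set w : ℕ → Fin m → ℝ :=
    fun k => relu (Wout.mulVec (rnnState Λ Win Wout s v k) + s k) with hwdef
  set z : ℕ → Fin m → ℝ := fun k => Wout.mulVec (rnnState Λ Win Wout s v k) with hzdef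
  have hwnn : ∀ k i, 0 ≤ w k i := fun k i => le_max_right _ _
  have hz_eq : ∀ k i, z k i = ltiOutput Λ Win Wout (0 : Matrix (Fin m) (Fin m) ℝ) w k i
      + ltiOutput Λ (1 : Matrix (Fin n) (Fin n) ℝ) Wout (0 : Matrix (Fin m) (Fin n) ℝ) v k i := by
    intro k i
    rw [ltiOutput_D0, ltiOutput_D0]
    have h := rnn_superposition Λ Win Wout s v k
    calc z k i = Wout.mulVec (rnnState Λ Win Wout s v k) i := rfl
      _ = Wout.mulVec (ltiState Λ Win w k
            + ltiState Λ (1 : Matrix (Fin n) (Fin n) ℝ) v k) i := by rw [← h]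
      _ = _ := by rw [Matrix.mulVec_add]; rfl
  have hZle : sN z τ ≤ ρ' * sN w τ + g1 * sN v τ := by
    have h2 : sN z τ = sN (fun k => ltiOutput Λ Win Wout (0 : Matrix (Fin m) (Fin m) ℝ) w k
        + ltiOutput Λ (1 : Matrix (Fin n) (Fin n) ℝ) Wout
          (0 : Matrix (Fin m) (Fin n) ℝ) v k) τ := by
      unfold sN
      congr 1
      exact trNormSq_congr fun k _ i => hz_eq k i
    have h5 : sN (ltiOutput Λ Win Wout (0 : Matrix (Fin m) (Fin m) ℝ) w) τ ≤ ρ' * sN w τ := by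
      have := posL2Gain_trunc Λ Win Wout hg00 htr0 w hwnn τ
      rwa [← hρ'def] at this
    have h4 := htr1 v τ
    rw [h2]
    calc sN (fun k => ltiOutput Λ Win Wout (0 : Matrix (Fin m) (Fin m) ℝ) w k
        + ltiOutput Λ (1 : Matrix (Fin n) (Fin n) ℝ) Wout
          (0 : Matrix (Fin m) (Fin n) ℝ) v k) τ
        ≤ sN (ltiOutput Λ Win Wout (0 : Matrix (Fin m) (Fin m) ℝ) w) τ
          + sN (ltiOutput Λ (1 : Matrix (Fin n) (Fin n) ℝ) Wout
            (0 : Matrix (Fin m) (Fin n) ℝ) v) τ := sN_add_le _ _ τ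
      _ ≤ ρ' * sN w τ + g1 * sN v τ := add_le_add h5 h4
  have hWle : sN w τ ≤ sN z τ + sN s τ := by
    have h1 : sN w τ ≤ sN (fun k => z k + s k) τ := by
      refine sN_mono τ fun k i => ?_
      have : w k i = max (z k i + s k i) 0 := rfl
      rw [this]
      exact relu_sq_le _
    exact le_trans h1 (sN_add_le z s τ)
  have hS0 := sN_nonneg s τ
  have hV0 := sN_nonneg v τ
  have hZ0 := sN_nonneg z τ
  have hW0 := sN_nonneg w τ
  have hZb : sN z τ ≤ K * (sN s τ + sN v τ) := by
    rw [hKdef, div_mul_eq_mul_div, le_div_iff₀ h1ρ]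
    have h6 : ρ' * sN w τ ≤ ρ' * (sN z τ + sN s τ) := mul_le_mul_of_nonneg_left hWle hρ'0
    nlinarith [mul_nonneg hρ'0 hV0, mul_nonneg hg10 hS0]
  have hWb : sN w τ ≤ (K + 1) * (sN s τ + sN v τ) := by nlinarith
  have hsv : (sN s τ + sN v τ)^2 ≤ 2 * (sN s τ ^ 2 + sN v τ ^ 2) := by
    nlinarith [sq_nonneg (sN s τ - sN v τ)]
  have hKK : (0:ℝ) ≤ K^2 + (K+1)^2 := by positivity
  have h7 : sN z τ ^ 2 ≤ K^2 * (sN s τ + sN v τ)^2 := by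
    have := pow_le_pow_left₀ hZ0 hZb 2
    rwa [mul_pow] at this
  have h8 : sN w τ ^ 2 ≤ (K+1)^2 * (sN s τ + sN v τ)^2 := by
    have := pow_le_pow_left₀ hW0 hWb 2
    rwa [mul_pow] at this
  have h9 := mul_le_mul_of_nonneg_left hsv hKK
  rw [← sq_sN z τ, ← sq_sN w τ, ← sq_sN s τ, ← sq_sN v τ]
  nlinarith


end
end

section
/- Consider the RNN x(0) = 0, x(k+1) = Λ x(k) + W_in w(k) + v(k), z(k) = W_out x(k), w(k) = Φ(z(k) + s(k)), where Λ ∈ ℝ^{n×n} is Schur–Cohn stable, W_in ∈ ℝ^{n×m}, W_out ∈ ℝ^{m×n}, Φ is the ReLU, and s, v are external inputs. Suppose there exists a diagonal matrix D ∈ ℝ^{m×m} with strictly positive diagonal entries such that the discrete-time LTI system with matrices (Λ, W_in D, D^{-1} W_out, 0) has positive l2 induced norm strictly less than 1. Then the RNN is finite-gain l2 stable: there exists γ ≥ 0 such that for all inputs s, v and all τ ∈ ℕ, ‖z_τ‖_2² + ‖w_τ‖_2² ≤ γ² (‖s_τ‖_2² + ‖v_τ‖_2²). -/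
open Matrix

noncomputable section

section AuxStability

open Finset Filter
open scoped ENNReal NNReal

attribute [local instance] Matrix.linftyOpNormedRing Matrix.linftyOpNormedAlgebra
  Matrix.linftyOpNormedAddCommGroup

lemma aux_norm_map_complex {n : Type*} [Fintype n] [DecidableEq n] (A : Matrix n n ℝ) :
    ‖A.map (algebraMap ℝ ℂ)‖ = ‖A‖ := by
  rw [Matrix.linfty_opNorm_def, Matrix.linfty_opNorm_def]
  congr 1
  simp [Matrix.map_apply, Complex.norm_real]

lemma aux_schur_geo {n : Type*} [Fintype n] [DecidableEq n] (A : Matrix n n ℝ)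
    (hA : SchurStable A) :
    ∃ C : ℝ, 0 < C ∧ ∃ r : ℝ, 0 ≤ r ∧ r < 1 ∧ ∀ k : ℕ, ‖A ^ k‖ ≤ C * r ^ k := by
  set B := A.map (algebraMap ℝ ℂ) with hB
  have hnormpow : ∀ k : ℕ, ‖A ^ k‖ = ‖B ^ k‖ := by
    intro k
    have : B ^ k = (A ^ k).map (algebraMap ℝ ℂ) := by
      simp only [hB, ← RingHom.mapMatrix_apply, ← map_pow]
    rw [this, aux_norm_map_complex]
  obtain ⟨c, hc1, hc2⟩ := exists_between hA
  have hc0 : 0 < c := lt_of_le_of_lt zero_le hc1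
  have hct : c ≠ ⊤ := hc2.ne_top
  set r := c.toReal with hr
  have hr0 : 0 < r := ENNReal.toReal_pos hc0.ne' hct
  have hr1 : r < 1 := by
    have := (ENNReal.toReal_lt_toReal hct (by norm_num)).mpr hc2
    simpa using this
  have hgel := spectrum.pow_nnnorm_pow_one_div_tendsto_nhds_spectralRadius B
  have hev : ∀ᶠ k : ℕ in atTop, (‖B ^ k‖₊ : ℝ≥0∞) ^ (1 / (k : ℝ)) < c :=
    hgel.eventually_lt_const hc1
  obtain ⟨N, hN⟩ := (hev.and (eventually_ge_atTop 1)).exists_forall_of_atTop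
  have key : ∀ k, N ≤ k → ‖B ^ k‖ ≤ r ^ k := by
    intro k hk
    obtain ⟨h1, h2⟩ := hN k hk
    have hkpos : (0:ℝ) < k := by exact_mod_cast h2
    have : ((‖B ^ k‖₊ : ℝ≥0∞) ^ (1 / (k : ℝ))) ^ (k : ℝ) ≤ c ^ (k : ℝ) :=
      ENNReal.rpow_le_rpow h1.le (le_of_lt hkpos)
    rw [← ENNReal.rpow_mul, one_div, inv_mul_cancel₀ hkpos.ne', ENNReal.rpow_one] at this
    have hne : c ^ (k:ℝ) ≠ ⊤ := ENNReal.rpow_ne_top_of_nonneg hkpos.le hct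
    have h3 := ENNReal.toReal_mono hne this
    rw [ENNReal.coe_toReal, coe_nnnorm] at h3
    simpa [← ENNReal.toReal_rpow, Real.rpow_natCast] using h3
  classical
  set C : ℝ := 1 + ∑ j ∈ Finset.range N, ‖A ^ j‖ / r ^ j with hC
  have hsum_nonneg : (0:ℝ) ≤ ∑ j ∈ Finset.range N, ‖A ^ j‖ / r ^ j :=
    Finset.sum_nonneg fun j _ => div_nonneg (norm_nonneg _) (pow_nonneg hr0.le _)
  refine ⟨C, by positivity, r, hr0.le, hr1, fun k => ?_⟩
  rcases le_or_gt N k with hk | hk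
  · calc ‖A ^ k‖ = ‖B ^ k‖ := hnormpow k
    _ ≤ r ^ k := key k hk
    _ = 1 * r ^ k := (one_mul _).symm
    _ ≤ C * r ^ k := by
        apply mul_le_mul_of_nonneg_right _ (pow_nonneg hr0.le _)
        simp [hC, hsum_nonneg]
  · have hmem : k ∈ Finset.range N := Finset.mem_range.mpr hk
    have : ‖A ^ k‖ / r ^ k ≤ C := by
      rw [hC]
      have := Finset.single_le_sum
        (f := fun j => ‖A ^ j‖ / r ^ j)
        (fun j _ => div_nonneg (norm_nonneg _) (pow_nonneg hr0.le _)) hmem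
      linarith
    calc ‖A ^ k‖ = (‖A ^ k‖ / r ^ k) * r ^ k := by
          field_simp
    _ ≤ C * r ^ k := mul_le_mul_of_nonneg_right this (pow_nonneg hr0.le _)

lemma aux_row_sum_le_norm {ι κ : Type*} [Fintype ι] [Fintype κ]
    (N : Matrix ι κ ℝ) (i : ι) : ∑ j, |N i j| ≤ ‖N‖ := by
  have h : (∑ j, ‖N i j‖₊ : ℝ≥0) ≤ ‖N‖₊ := by
    rw [Matrix.linfty_opNNNorm_def]
    exact Finset.le_sup (f := fun i => ∑ j, ‖N i j‖₊) (Finset.mem_univ i)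
  have h2 : ((∑ j, ‖N i j‖₊ : ℝ≥0) : ℝ) ≤ (‖N‖₊ : ℝ) := NNReal.coe_le_coe.mpr h
  simpa [NNReal.coe_sum, Real.norm_eq_abs] using h2

lemma aux_mulVec_sq_bound {ι κ : Type*} [Fintype ι] [Fintype κ]
    (N : Matrix ι κ ℝ) (u : κ → ℝ) :
    ∑ i, (N.mulVec u i) ^ 2 ≤ (Fintype.card ι) * ‖N‖ ^ 2 * ∑ j, u j ^ 2 := by
  have hrow : ∀ i, (N.mulVec u i) ^ 2 ≤ ‖N‖ ^ 2 * ∑ j, u j ^ 2 := by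
    intro i
    have hcs := Finset.sum_mul_sq_le_sq_mul_sq Finset.univ (fun j => N i j) u
    have h1 : ∑ j, (N i j) ^ 2 ≤ ‖N‖ ^ 2 := by
      have h2 : ∑ j, (N i j) ^ 2 ≤ (∑ j, |N i j|) ^ 2 := by
        have := Finset.sum_sq_le_sq_sum_of_nonneg
          (s := Finset.univ) (f := fun j => |N i j|) (fun j _ => abs_nonneg _)
        simpa [sq_abs] using this
      refine h2.trans ?_
      exact pow_le_pow_left₀ (Finset.sum_nonneg fun j _ => abs_nonneg _)
        (aux_row_sum_le_norm N i) 2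
    calc (N.mulVec u i) ^ 2 = (∑ j, N i j * u j) ^ 2 := by
          rw [Matrix.mulVec, dotProduct]
    _ ≤ (∑ j, (N i j) ^ 2) * ∑ j, u j ^ 2 := hcs
    _ ≤ ‖N‖ ^ 2 * ∑ j, u j ^ 2 :=
        mul_le_mul_of_nonneg_right h1 (Finset.sum_nonneg fun j _ => sq_nonneg _)
  calc ∑ i, (N.mulVec u i) ^ 2 ≤ ∑ _i : ι, ‖N‖ ^ 2 * ∑ j, u j ^ 2 :=
        Finset.sum_le_sum fun i _ => hrow i
  _ = (Fintype.card ι) * ‖N‖ ^ 2 * ∑ j, u j ^ 2 := by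
      rw [Finset.sum_const, Finset.card_univ, nsmul_eq_mul, mul_assoc]

/-- Minkowski inequality for finite sums. -/
lemma aux_sqrt_sum_sq_add {κ : Type*} (s : Finset κ) (f g : κ → ℝ) :
    Real.sqrt (∑ k ∈ s, (f k + g k) ^ 2)
      ≤ Real.sqrt (∑ k ∈ s, f k ^ 2) + Real.sqrt (∑ k ∈ s, g k ^ 2) := by
  have hf : (0:ℝ) ≤ ∑ k ∈ s, f k ^ 2 := Finset.sum_nonneg fun _ _ => sq_nonneg _
  have hg : (0:ℝ) ≤ ∑ k ∈ s, g k ^ 2 := Finset.sum_nonneg fun _ _ => sq_nonneg _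
  have hcs : ∑ k ∈ s, f k * g k
      ≤ Real.sqrt (∑ k ∈ s, f k ^ 2) * Real.sqrt (∑ k ∈ s, g k ^ 2) := by
    have h1 := Finset.sum_mul_sq_le_sq_mul_sq s f g
    refine (le_abs_self _).trans ?_
    rw [← Real.sqrt_sq_eq_abs, ← Real.sqrt_mul hf]
    exact Real.sqrt_le_sqrt h1
  have key : ∑ k ∈ s, (f k + g k) ^ 2
      ≤ (Real.sqrt (∑ k ∈ s, f k ^ 2) + Real.sqrt (∑ k ∈ s, g k ^ 2)) ^ 2 := by
    have e1 : ∑ k ∈ s, (f k + g k) ^ 2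
        = ∑ k ∈ s, f k ^ 2 + 2 * (∑ k ∈ s, f k * g k) + ∑ k ∈ s, g k ^ 2 := by
      have hpt : ∀ k, (f k + g k) ^ 2 = f k ^ 2 + 2 * (f k * g k) + g k ^ 2 :=
        fun k => by ring
      simp_rw [hpt, Finset.sum_add_distrib, ← Finset.mul_sum]
    have e2 : (Real.sqrt (∑ k ∈ s, f k ^ 2) + Real.sqrt (∑ k ∈ s, g k ^ 2)) ^ 2
        = ∑ k ∈ s, f k ^ 2
          + 2 * (Real.sqrt (∑ k ∈ s, f k ^ 2) * Real.sqrt (∑ k ∈ s, g k ^ 2))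
          + ∑ k ∈ s, g k ^ 2 := by
      rw [add_sq, Real.sq_sqrt hf, Real.sq_sqrt hg]; ring
    rw [e1, e2]
    linarith
  calc Real.sqrt (∑ k ∈ s, (f k + g k) ^ 2)
      ≤ Real.sqrt ((Real.sqrt (∑ k ∈ s, f k ^ 2) + Real.sqrt (∑ k ∈ s, g k ^ 2)) ^ 2) :=
        Real.sqrt_le_sqrt key
  _ = _ := Real.sqrt_sq (by positivity)

/-- Minkowski for a finite sum of vectors. -/
lemma aux_sqrt_sq_sum_le {ι : Type*} [Fintype ι] (s : Finset ℕ) (F : ℕ → ι → ℝ) :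
    Real.sqrt (∑ i, (∑ j ∈ s, F j i) ^ 2) ≤ ∑ j ∈ s, Real.sqrt (∑ i, F j i ^ 2) := by
  classical
  induction s using Finset.cons_induction with
  | empty => simp
  | cons a s ha ih =>
      rw [Finset.sum_cons]
      refine le_trans ?_ (add_le_add_right ih _)
      have : ∀ i, (∑ j ∈ Finset.cons a s ha, F j i) = F a i + ∑ j ∈ s, F j i := by
        intro i; rw [Finset.sum_cons]
      simp_rw [this]
      exact aux_sqrt_sum_sq_add Finset.univ (fun i => F a i) (fun i => ∑ j ∈ s, F j i)

lemma aux_geom_sum_le_inv {r : ℝ} (h0 : 0 ≤ r) (h1 : r < 1) (k : ℕ) :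
    ∑ i ∈ Finset.range k, r ^ i ≤ (1 - r)⁻¹ :=
  (Summable.sum_le_tsum _ (fun i _ => pow_nonneg h0 i)
    (summable_geometric_of_lt_one h0 h1)).trans_eq (tsum_geometric_of_lt_one h0 h1)

/-- Young-type convolution bound. -/
lemma aux_conv_sq_bound (a : ℕ → ℝ) (ha : ∀ j, 0 ≤ a j) {M r : ℝ} (hM : 0 ≤ M)
    (hr0 : 0 ≤ r) (hr1 : r < 1) (T : ℕ) :
    ∑ k ∈ Finset.range T, (∑ j ∈ Finset.range k, M * r ^ (k - 1 - j) * a j) ^ 2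
      ≤ (M * (1 - r)⁻¹) ^ 2 * ∑ j ∈ Finset.range T, a j ^ 2 := by
  have h1r : (0:ℝ) < 1 - r := by linarith
  have step1 : ∀ k, (∑ j ∈ Finset.range k, M * r ^ (k - 1 - j) * a j) ^ 2
      ≤ M ^ 2 * (1 - r)⁻¹ * ∑ j ∈ Finset.range k, r ^ (k - 1 - j) * a j ^ 2 := by
    intro k
    have hcs := Finset.sum_mul_sq_le_sq_mul_sq (Finset.range k)
      (fun j => Real.sqrt (r ^ (k - 1 - j))) (fun j => Real.sqrt (r ^ (k - 1 - j)) * a j)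
    have hfg : ∀ j, Real.sqrt (r ^ (k - 1 - j)) * (Real.sqrt (r ^ (k - 1 - j)) * a j)
        = r ^ (k - 1 - j) * a j := fun j => by
      rw [← mul_assoc, Real.mul_self_sqrt (pow_nonneg hr0 _)]
    have hf2 : ∀ j, (Real.sqrt (r ^ (k - 1 - j))) ^ 2 = r ^ (k - 1 - j) :=
      fun j => Real.sq_sqrt (pow_nonneg hr0 _)
    have hg2 : ∀ j, (Real.sqrt (r ^ (k - 1 - j)) * a j) ^ 2 = r ^ (k - 1 - j) * a j ^ 2 :=
      fun j => by rw [mul_pow, Real.sq_sqrt (pow_nonneg hr0 _)]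
    simp only [hfg, hf2, hg2] at hcs
    have hgeom : ∑ j ∈ Finset.range k, r ^ (k - 1 - j) ≤ (1 - r)⁻¹ := by
      rw [Finset.sum_range_reflect (fun i => r ^ i) k]
      exact aux_geom_sum_le_inv hr0 hr1 k
    have hsum_nonneg : (0:ℝ) ≤ ∑ j ∈ Finset.range k, r ^ (k - 1 - j) * a j ^ 2 :=
      Finset.sum_nonneg fun j _ =>
        mul_nonneg (pow_nonneg hr0 _) (sq_nonneg _)
    have e : ∑ j ∈ Finset.range k, M * r ^ (k - 1 - j) * a j
        = M * ∑ j ∈ Finset.range k, r ^ (k - 1 - j) * a j := by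
      rw [Finset.mul_sum]
      exact Finset.sum_congr rfl fun j _ => by ring
    rw [e, mul_pow]
    calc M ^ 2 * (∑ j ∈ Finset.range k, r ^ (k - 1 - j) * a j) ^ 2
        ≤ M ^ 2 * ((∑ j ∈ Finset.range k, r ^ (k - 1 - j))
            * ∑ j ∈ Finset.range k, r ^ (k - 1 - j) * a j ^ 2) :=
          mul_le_mul_of_nonneg_left hcs (sq_nonneg M)
    _ ≤ M ^ 2 * ((1 - r)⁻¹ * ∑ j ∈ Finset.range k, r ^ (k - 1 - j) * a j ^ 2) := by
          apply mul_le_mul_of_nonneg_left _ (sq_nonneg M)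
          exact mul_le_mul_of_nonneg_right hgeom hsum_nonneg
    _ = M ^ 2 * (1 - r)⁻¹ * ∑ j ∈ Finset.range k, r ^ (k - 1 - j) * a j ^ 2 := by ring
  calc ∑ k ∈ Finset.range T, (∑ j ∈ Finset.range k, M * r ^ (k - 1 - j) * a j) ^ 2
      ≤ ∑ k ∈ Finset.range T,
          M ^ 2 * (1 - r)⁻¹ * ∑ j ∈ Finset.range k, r ^ (k - 1 - j) * a j ^ 2 :=
        Finset.sum_le_sum fun k _ => step1 k
  _ = M ^ 2 * (1 - r)⁻¹
        * ∑ k ∈ Finset.range T, ∑ j ∈ Finset.range k, r ^ (k - 1 - j) * a j ^ 2 := by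
      rw [Finset.mul_sum]
  _ ≤ M ^ 2 * (1 - r)⁻¹ * ((1 - r)⁻¹ * ∑ j ∈ Finset.range T, a j ^ 2) := by
      apply mul_le_mul_of_nonneg_left _ (by positivity)
      have hswap : ∑ k ∈ Finset.range T, ∑ j ∈ Finset.range k, r ^ (k - 1 - j) * a j ^ 2
          = ∑ i ∈ Finset.range T, ∑ k ∈ Finset.Ico (i + 1) T, r ^ (k - 1 - i) * a i ^ 2 := by
        have := Finset.sum_Ico_Ico_comm' 0 T (fun i k => r ^ (k - 1 - i) * a i ^ 2)
        simp only [← Finset.range_eq_Ico] at this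
        exact this.symm
      rw [hswap]
      have hinner : ∀ i, ∑ k ∈ Finset.Ico (i + 1) T, r ^ (k - 1 - i) * a i ^ 2
          ≤ (1 - r)⁻¹ * a i ^ 2 := by
        intro i
        rw [Finset.sum_Ico_eq_sum_range]
        have he : ∀ t, r ^ (i + 1 + t - 1 - i) * a i ^ 2 = r ^ t * a i ^ 2 := by
          intro t; congr 2; omega
        simp_rw [he]
        rw [← Finset.sum_mul]
        exact mul_le_mul_of_nonneg_right
          (aux_geom_sum_le_inv hr0 hr1 _) (sq_nonneg _)
      calc ∑ i ∈ Finset.range T, ∑ k ∈ Finset.Ico (i + 1) T, r ^ (k - 1 - i) * a i ^ 2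
          ≤ ∑ i ∈ Finset.range T, (1 - r)⁻¹ * a i ^ 2 :=
            Finset.sum_le_sum fun i _ => hinner i
      _ = (1 - r)⁻¹ * ∑ i ∈ Finset.range T, a i ^ 2 := by rw [Finset.mul_sum]
  _ = (M * (1 - r)⁻¹) ^ 2 * ∑ j ∈ Finset.range T, a j ^ 2 := by ring

lemma aux_ltiState_eq_sum {n w : Type*} [Fintype n] [Fintype w] [DecidableEq n]
    (A : Matrix n n ℝ) (B : Matrix n w ℝ) (ws : ℕ → w → ℝ) (k : ℕ) :
    ltiState A B ws k = ∑ j ∈ Finset.range k, (A ^ (k - 1 - j) * B).mulVec (ws j) := by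
  induction k with
  | zero => simp [ltiState]
  | succ k ih =>
      rw [ltiState, ih, Finset.sum_range_succ]
      congr 1
      · rw [show A.mulVec (∑ j ∈ Finset.range k, (A ^ (k - 1 - j) * B).mulVec (ws j))
            = ∑ j ∈ Finset.range k, A.mulVec ((A ^ (k - 1 - j) * B).mulVec (ws j)) from
            map_sum (Matrix.mulVecLin A) _ _]
        refine Finset.sum_congr rfl fun j hj => ?_
        have hj' := Finset.mem_range.mp hj
        rw [Matrix.mulVec_mulVec, ← Matrix.mul_assoc, ← pow_succ']
        have he : k - 1 - j + 1 = k + 1 - 1 - j := by omega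
        rw [he]
      · have : k + 1 - 1 - k = 0 := by omega
        rw [this, pow_zero, Matrix.one_mul]

lemma aux_ltiState_congr {n w : Type*} [Fintype n] [Fintype w] [DecidableEq n]
    (A : Matrix n n ℝ) (B : Matrix n w ℝ) (ws ws' : ℕ → w → ℝ) (k : ℕ)
    (h : ∀ j, j < k → ws j = ws' j) :
    ltiState A B ws k = ltiState A B ws' k := by
  rw [aux_ltiState_eq_sum, aux_ltiState_eq_sum]
  exact Finset.sum_congr rfl fun j hj => by rw [h j (Finset.mem_range.mp hj)]

lemma aux_ltiState_smul {n w : Type*} [Fintype n] [Fintype w] [DecidableEq n]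
    (A : Matrix n n ℝ) (B : Matrix n w ℝ) (ws : ℕ → w → ℝ) (c : ℝ) (k : ℕ) :
    ltiState A B (fun j => c • ws j) k = c • ltiState A B ws k := by
  rw [aux_ltiState_eq_sum, aux_ltiState_eq_sum, Finset.smul_sum]
  exact Finset.sum_congr rfl fun j _ => Matrix.mulVec_smul _ _ _

lemma aux_ltiOutput_eq_sum {n w z : Type*} [Fintype n] [Fintype w] [Fintype z] [DecidableEq n]
    (A : Matrix n n ℝ) (B : Matrix n w ℝ) (C : Matrix z n ℝ) (ws : ℕ → w → ℝ) (k : ℕ) :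
    ltiOutput A B C (0 : Matrix z w ℝ) ws k
      = ∑ j ∈ Finset.range k, (C * (A ^ (k - 1 - j) * B)).mulVec (ws j) := by
  rw [ltiOutput, Matrix.zero_mulVec, add_zero, aux_ltiState_eq_sum]
  rw [show C.mulVec (∑ j ∈ Finset.range k, (A ^ (k - 1 - j) * B).mulVec (ws j))
      = ∑ j ∈ Finset.range k, C.mulVec ((A ^ (k - 1 - j) * B).mulVec (ws j)) from
      map_sum (Matrix.mulVecLin C) _ _]
  exact Finset.sum_congr rfl fun j _ => Matrix.mulVec_mulVec _ _ _

/-- Convolution bound for the output of an LTI system with Schur stable `A`. -/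
lemma aux_lti_partial_bound {n w z : Type*} [Fintype n] [Fintype w] [Fintype z] [DecidableEq n]
    (A : Matrix n n ℝ) (B : Matrix n w ℝ) (C : Matrix z n ℝ) (hA : SchurStable A) :
    ∃ g0 : ℝ, 0 ≤ g0 ∧ ∀ (ws : ℕ → w → ℝ) (S : ℝ),
      (∀ T, ∑ k ∈ Finset.range T, ∑ i, ws k i ^ 2 ≤ S) →
      ∀ T, ∑ k ∈ Finset.range T, ∑ i, (ltiOutput A B C (0 : Matrix z w ℝ) ws k i) ^ 2
        ≤ g0 ^ 2 * S := by
  obtain ⟨C₀, hC₀, r, hr0, hr1, hgeo⟩ := aux_schur_geo A hA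
  set M : ℝ := Real.sqrt (Fintype.card z) * (‖C‖ * (C₀ * ‖B‖)) with hM
  have hMnn : 0 ≤ M := by positivity
  have hinv : (0:ℝ) ≤ (1 - r)⁻¹ := inv_nonneg.mpr (by linarith)
  refine ⟨M * (1 - r)⁻¹, mul_nonneg hMnn hinv, ?_⟩
  intro ws S hS T
  set a : ℕ → ℝ := fun j => Real.sqrt (∑ i, ws j i ^ 2) with haDef
  have ha : ∀ j, 0 ≤ a j := fun j => Real.sqrt_nonneg _
  have hout : ∀ k, Real.sqrt (∑ i, (ltiOutput A B C (0 : Matrix z w ℝ) ws k i) ^ 2)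
      ≤ ∑ j ∈ Finset.range k, M * r ^ (k - 1 - j) * a j := by
    intro k
    rw [aux_ltiOutput_eq_sum]
    simp only [Finset.sum_apply]
    refine le_trans (aux_sqrt_sq_sum_le (Finset.range k)
      (fun j => (C * (A ^ (k - 1 - j) * B)).mulVec (ws j))) ?_
    refine Finset.sum_le_sum fun j _ => ?_
    have h1 := aux_mulVec_sq_bound (C * (A ^ (k - 1 - j) * B)) (ws j)
    have h2 : Real.sqrt (∑ i, ((C * (A ^ (k - 1 - j) * B)).mulVec (ws j) i) ^ 2)
        ≤ Real.sqrt ((Fintype.card z) * ‖C * (A ^ (k - 1 - j) * B)‖ ^ 2 * ∑ i, ws j i ^ 2) :=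
      Real.sqrt_le_sqrt h1
    refine h2.trans ?_
    rw [Real.sqrt_mul (by positivity), Real.sqrt_mul (by positivity),
      Real.sqrt_sq (norm_nonneg _)]
    have hnorm : ‖C * (A ^ (k - 1 - j) * B)‖ ≤ ‖C‖ * (C₀ * r ^ (k - 1 - j) * ‖B‖) := by
      refine le_trans (Matrix.linfty_opNorm_mul _ _) ?_
      refine mul_le_mul_of_nonneg_left ?_ (norm_nonneg C)
      refine le_trans (Matrix.linfty_opNorm_mul _ _) ?_
      exact mul_le_mul_of_nonneg_right (hgeo _) (norm_nonneg B)
    have h3 : ‖C * (A ^ (k - 1 - j) * B)‖ * a j ≤ (‖C‖ * (C₀ * r ^ (k - 1 - j) * ‖B‖)) * a j :=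
      mul_le_mul_of_nonneg_right hnorm (ha j)
    calc Real.sqrt (Fintype.card z) * ‖C * (A ^ (k - 1 - j) * B)‖ * Real.sqrt (∑ i, ws j i ^ 2)
        = Real.sqrt (Fintype.card z) * (‖C * (A ^ (k - 1 - j) * B)‖ * a j) := by
          simp only [haDef]; ring
    _ ≤ Real.sqrt (Fintype.card z) * ((‖C‖ * (C₀ * r ^ (k - 1 - j) * ‖B‖)) * a j) :=
        mul_le_mul_of_nonneg_left h3 (Real.sqrt_nonneg _)
    _ = M * r ^ (k - 1 - j) * a j := by rw [hM]; ring
  have hsq : ∀ k, ∑ i, (ltiOutput A B C (0 : Matrix z w ℝ) ws k i) ^ 2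
      ≤ (∑ j ∈ Finset.range k, M * r ^ (k - 1 - j) * a j) ^ 2 := by
    intro k
    have h0 : (0:ℝ) ≤ ∑ i, (ltiOutput A B C (0 : Matrix z w ℝ) ws k i) ^ 2 :=
      Finset.sum_nonneg fun _ _ => sq_nonneg _
    have := pow_le_pow_left₀ (Real.sqrt_nonneg _) (hout k) 2
    rwa [Real.sq_sqrt h0] at this
  calc ∑ k ∈ Finset.range T, ∑ i, (ltiOutput A B C (0 : Matrix z w ℝ) ws k i) ^ 2
      ≤ ∑ k ∈ Finset.range T, (∑ j ∈ Finset.range k, M * r ^ (k - 1 - j) * a j) ^ 2 :=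
        Finset.sum_le_sum fun k _ => hsq k
  _ ≤ (M * (1 - r)⁻¹) ^ 2 * ∑ j ∈ Finset.range T, a j ^ 2 :=
        aux_conv_sq_bound a ha hMnn hr0 hr1 T
  _ ≤ (M * (1 - r)⁻¹) ^ 2 * S := by
        apply mul_le_mul_of_nonneg_left _ (sq_nonneg _)
        have : ∀ j, a j ^ 2 = ∑ i, ws j i ^ 2 := fun j =>
          Real.sq_sqrt (Finset.sum_nonneg fun _ _ => sq_nonneg _)
        simp_rw [this]
        exact hS T

lemma aux_trunc_partial_le {ι : Type*} [Fintype ι] (u : ℕ → ι → ℝ) (τ T : ℕ) :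
    ∑ k ∈ Finset.range T, ∑ i, (if k ≤ τ then u k i else 0) ^ 2
      ≤ ∑ k ∈ Finset.range (τ + 1), ∑ i, u k i ^ 2 := by
  classical
  have hpt : ∀ k, ∑ i, (if k ≤ τ then u k i else 0) ^ 2
      = if k ≤ τ then ∑ i, u k i ^ 2 else 0 := by
    intro k; split <;> simp
  simp_rw [hpt]
  rw [← Finset.sum_filter]
  apply Finset.sum_le_sum_of_subset_of_nonneg
  · intro k hk
    simp only [Finset.mem_filter, Finset.mem_range] at hk ⊢
    omega
  · intro k _ _
    exact Finset.sum_nonneg fun _ _ => sq_nonneg _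

lemma aux_sq_le_of_sqrt_le {x b : ℝ} (hx : 0 ≤ x) (h : Real.sqrt x ≤ b) : x ≤ b ^ 2 := by
  have := pow_le_pow_left₀ (Real.sqrt_nonneg x) h 2
  rwa [Real.sq_sqrt hx] at this

lemma aux_sigNorm_le_of_partial {w : Type*} [Fintype w] (u : ℕ → w → ℝ) (c : ℝ) (hc : 0 ≤ c)
    (h : ∀ T, ∑ k ∈ Finset.range T, ∑ i, u k i ^ 2 ≤ c ^ 2) : sigNorm u ≤ c := by
  rw [sigNorm]
  have hnn : ∀ k, (0:ℝ) ≤ ∑ i, u k i ^ 2 :=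
    fun k => Finset.sum_nonneg fun _ _ => sq_nonneg _
  have hts := Real.tsum_le_of_sum_range_le hnn h
  calc Real.sqrt (∑' k, ∑ i, u k i ^ 2) ≤ Real.sqrt (c ^ 2) := Real.sqrt_le_sqrt hts
  _ = c := Real.sqrt_sq hc

lemma aux_posgain_partial {n w z : Type*} [Fintype n] [Fintype w] [Fintype z] [DecidableEq n]
    (A : Matrix n n ℝ) (B : Matrix n w ℝ) (C : Matrix z n ℝ) (hA : SchurStable A)
    (u : ℕ → w → ℝ) (τ : ℕ) (hnn : ∀ k i, 0 ≤ u k i) (hsupp : ∀ k, τ < k → u k = 0) :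
    ∀ T, ∑ k ∈ Finset.range T, ∑ i, (ltiOutput A B C (0 : Matrix z w ℝ) u k i) ^ 2
      ≤ (max (posL2Gain A B C (0 : Matrix z w ℝ)) 0) ^ 2
        * ∑ k ∈ Finset.range (τ + 1), ∑ i, u k i ^ 2 := by
  classical
  obtain ⟨g0, hg0, hbd⟩ := aux_lti_partial_bound A B C hA
  have hSSbdd : BddAbove {c : ℝ | ∃ ws : ℕ → w → ℝ, (∀ k i, 0 ≤ ws k i) ∧
      Summable (fun k => ∑ i, (ws k i) ^ 2) ∧ sigNorm ws = 1 ∧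
      c = sigNorm (ltiOutput A B C (0 : Matrix z w ℝ) ws)} := by
    refine ⟨g0, fun c hc => ?_⟩
    obtain ⟨ws, hws1, hws2, hws3, rfl⟩ := hc
    have htsum1 : ∑' k, ∑ i, ws k i ^ 2 = 1 := by
      have := hws3
      rw [sigNorm] at this
      exact Real.sqrt_eq_one.mp this
    have hpart : ∀ T, ∑ k ∈ Finset.range T, ∑ i, ws k i ^ 2 ≤ 1 := by
      intro T
      rw [← htsum1]
      exact Summable.sum_le_tsum _ (fun k _ => Finset.sum_nonneg fun _ _ => sq_nonneg _) hws2
    have hb := hbd ws 1 hpart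
    refine aux_sigNorm_le_of_partial _ g0 hg0 fun T => ?_
    simpa using hb T
  set W2 : ℝ := ∑ k ∈ Finset.range (τ + 1), ∑ i, u k i ^ 2 with hW2def
  have hW2nn : 0 ≤ W2 :=
    Finset.sum_nonneg fun _ _ => Finset.sum_nonneg fun _ _ => sq_nonneg _
  rcases eq_or_lt_of_le hW2nn with hz | hpos
  · have hu0 : ∀ k, u k = 0 := by
      intro k
      rcases le_or_gt k τ with hk | hk
      · funext i
        have hle := Finset.single_le_sum
          (f := fun k => ∑ i, u k i ^ 2)
          (fun k _ => Finset.sum_nonneg fun _ _ => sq_nonneg _)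
          (Finset.mem_range.mpr (by omega : k < τ + 1))
        have hksum : ∑ i, u k i ^ 2 = 0 :=
          le_antisymm (hle.trans (le_of_eq hz.symm))
            (Finset.sum_nonneg fun _ _ => sq_nonneg _)
        have := (Finset.sum_eq_zero_iff_of_nonneg
          (fun i _ => sq_nonneg (u k i))).mp hksum i (Finset.mem_univ i)
        have := pow_eq_zero_iff (n := 2) (by norm_num) |>.mp this
        simpa using this
      · exact hsupp k hk
    have hout : ∀ k, ltiOutput A B C (0 : Matrix z w ℝ) u k = 0 := by
      intro k
      rw [aux_ltiOutput_eq_sum]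
      exact Finset.sum_eq_zero fun j _ => by rw [hu0 j, Matrix.mulVec_zero]
    intro T
    simp only [hout, Pi.zero_apply]
    simp only [ne_eq, OfNat.ofNat_ne_zero, not_false_eq_true, zero_pow,
      Finset.sum_const_zero]
    exact mul_nonneg (sq_nonneg _) hW2nn
  · set W : ℝ := Real.sqrt W2 with hWdef
    have hWpos : 0 < W := Real.sqrt_pos.mpr hpos
    have hWsq : W ^ 2 = W2 := Real.sq_sqrt hW2nn
    set u' : ℕ → w → ℝ := fun k => W⁻¹ • u k with hu'
    have hsupp' : ∀ k ∉ Finset.range (τ + 1), (∑ i, u' k i ^ 2) = 0 := by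
      intro k hk
      have hkτ : τ < k := by
        simp only [Finset.mem_range, not_lt] at hk; omega
      simp [hu', hsupp k hkτ]
    have hsum' : Summable (fun k => ∑ i, (u' k i) ^ 2) :=
      summable_of_ne_finset_zero hsupp'
    have htsum' : ∑' k, ∑ i, (u' k i) ^ 2 = 1 := by
      rw [tsum_eq_sum hsupp']
      have hpt : ∀ k i, (u' k i) ^ 2 = W⁻¹ ^ 2 * u k i ^ 2 := by
        intro k i
        simp [hu', mul_pow]
      simp_rw [hpt, ← Finset.mul_sum]
      rw [← hW2def]
      field_simp [hWsq]
      linarith [hWsq]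
    have hnorm1 : sigNorm u' = 1 := by
      rw [sigNorm, htsum', Real.sqrt_one]
    have hmem : sigNorm (ltiOutput A B C (0 : Matrix z w ℝ) u')
        ∈ {c : ℝ | ∃ ws : ℕ → w → ℝ, (∀ k i, 0 ≤ ws k i) ∧
            Summable (fun k => ∑ i, (ws k i) ^ 2) ∧ sigNorm ws = 1 ∧
            c = sigNorm (ltiOutput A B C (0 : Matrix z w ℝ) ws)} :=
      ⟨u', fun k i => by
          simp only [hu', Pi.smul_apply, smul_eq_mul]
          exact mul_nonneg (inv_nonneg.mpr hWpos.le) (hnn k i),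
        hsum', hnorm1, rfl⟩
    have hle : sigNorm (ltiOutput A B C (0 : Matrix z w ℝ) u')
        ≤ posL2Gain A B C (0 : Matrix z w ℝ) := le_csSup hSSbdd hmem
    have hle1 : sigNorm (ltiOutput A B C (0 : Matrix z w ℝ) u')
        ≤ max (posL2Gain A B C (0 : Matrix z w ℝ)) 0 := hle.trans (le_max_left _ _)
    have houtnn : ∀ k, (0:ℝ) ≤ ∑ i, (ltiOutput A B C (0 : Matrix z w ℝ) u' k i) ^ 2 :=
      fun k => Finset.sum_nonneg fun _ _ => sq_nonneg _
    have hinpart : ∀ T, ∑ k ∈ Finset.range T, ∑ i, u' k i ^ 2 ≤ 1 := by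
      intro T
      rw [← htsum']
      exact Summable.sum_le_tsum _ (fun k _ => Finset.sum_nonneg fun _ _ => sq_nonneg _) hsum'
    have hsummable_out :
        Summable (fun k => ∑ i, (ltiOutput A B C (0 : Matrix z w ℝ) u' k i) ^ 2) := by
      refine summable_of_sum_range_le (c := g0 ^ 2 * 1) houtnn fun T => ?_
      exact hbd u' 1 hinpart T
    have hpart' : ∀ T, ∑ k ∈ Finset.range T,
        ∑ i, (ltiOutput A B C (0 : Matrix z w ℝ) u' k i) ^ 2
        ≤ (max (posL2Gain A B C (0 : Matrix z w ℝ)) 0) ^ 2 := by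
      intro T
      calc ∑ k ∈ Finset.range T, ∑ i, (ltiOutput A B C (0 : Matrix z w ℝ) u' k i) ^ 2
          ≤ ∑' k, ∑ i, (ltiOutput A B C (0 : Matrix z w ℝ) u' k i) ^ 2 :=
            Summable.sum_le_tsum _ (fun k _ => houtnn k) hsummable_out
      _ = (sigNorm (ltiOutput A B C (0 : Matrix z w ℝ) u')) ^ 2 := by
            rw [sigNorm, Real.sq_sqrt (tsum_nonneg houtnn)]
      _ ≤ (max (posL2Gain A B C (0 : Matrix z w ℝ)) 0) ^ 2 :=
            pow_le_pow_left₀ (Real.sqrt_nonneg _) hle1 2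
    have hscale : ∀ k, ltiOutput A B C (0 : Matrix z w ℝ) u k
        = W • ltiOutput A B C (0 : Matrix z w ℝ) u' k := by
      intro k
      rw [aux_ltiOutput_eq_sum, aux_ltiOutput_eq_sum, Finset.smul_sum]
      refine Finset.sum_congr rfl fun j _ => ?_
      rw [← Matrix.mulVec_smul]
      congr 1
      rw [hu', smul_smul, mul_inv_cancel₀ hWpos.ne', one_smul]
    intro T
    have hpt2 : ∀ k i, (ltiOutput A B C (0 : Matrix z w ℝ) u k i) ^ 2
        = W ^ 2 * (ltiOutput A B C (0 : Matrix z w ℝ) u' k i) ^ 2 := by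
      intro k i
      rw [hscale k]
      simp [Pi.smul_apply, smul_eq_mul, mul_pow]
    simp_rw [hpt2, ← Finset.mul_sum]
    calc W ^ 2 * ∑ k ∈ Finset.range T,
          ∑ i, (ltiOutput A B C (0 : Matrix z w ℝ) u' k i) ^ 2
        ≤ W ^ 2 * (max (posL2Gain A B C (0 : Matrix z w ℝ)) 0) ^ 2 :=
          mul_le_mul_of_nonneg_left (hpart' T) (sq_nonneg _)
    _ = (max (posL2Gain A B C (0 : Matrix z w ℝ)) 0) ^ 2 * W2 := by rw [hWsq]; ring

lemma aux_minkowski_double {ι : Type*} [Fintype ι] (τ : ℕ) (f g : ℕ → ι → ℝ) :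
    Real.sqrt (∑ k ∈ Finset.range (τ + 1), ∑ i, (f k i + g k i) ^ 2)
      ≤ Real.sqrt (∑ k ∈ Finset.range (τ + 1), ∑ i, f k i ^ 2)
        + Real.sqrt (∑ k ∈ Finset.range (τ + 1), ∑ i, g k i ^ 2) := by
  have := aux_sqrt_sum_sq_add ((Finset.range (τ + 1)) ×ˢ (Finset.univ : Finset ι))
    (fun p => f p.1 p.2) (fun p => g p.1 p.2)
  simpa [Finset.sum_product] using this

end AuxStability

set_option maxHeartbeats 1000000 in
/-- scaled small-gain stability condition for the RNN with ReLU activation: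
if ‖D⁻¹ G₀ D‖_{2+} < 1 for some positive diagonal scaling D, the RNN is finite-gain
l2 stable. Here z(k) = W_out x(k) and w(k) = Φ(z(k) + s(k)). -/
theorem stmt_17 (n m : ℕ) (Λ : Matrix (Fin n) (Fin n) ℝ)
    (Win : Matrix (Fin n) (Fin m) ℝ) (Wout : Matrix (Fin m) (Fin n) ℝ)
    (hΛ : SchurStable Λ)
    (hgain : ∃ d : Fin m → ℝ, (∀ i, 0 < d i) ∧
      posL2Gain Λ (Win * Matrix.diagonal d)
        ((Matrix.diagonal fun i => (d i)⁻¹) * Wout)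
        (0 : Matrix (Fin m) (Fin m) ℝ) < 1) :
    ∃ γ : ℝ, 0 ≤ γ ∧ ∀ (s : ℕ → Fin m → ℝ) (v : ℕ → Fin n → ℝ) (τ : ℕ),
      trNormSq (fun k => Wout.mulVec (rnnState Λ Win Wout s v k)) τ
        + trNormSq (fun k => relu (Wout.mulVec (rnnState Λ Win Wout s v k) + s k)) τ
      ≤ γ ^ 2 * (trNormSq s τ + trNormSq v τ) := by
  classical
  obtain ⟨d, hd, hg⟩ := hgain
  set Bs := Win * Matrix.diagonal d with hBs
  set Cs := (Matrix.diagonal fun i => (d i)⁻¹) * Wout with hCs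
  set G : ℝ := max (posL2Gain Λ Bs Cs (0 : Matrix (Fin m) (Fin m) ℝ)) 0 with hGdef
  have hGnn : 0 ≤ G := le_max_right _ _
  have hGlt : G < 1 := max_lt hg one_pos
  have h1g : (0:ℝ) < 1 - G := by linarith
  obtain ⟨β, hβnn, hβ⟩ := aux_lti_partial_bound Λ (1 : Matrix (Fin n) (Fin n) ℝ) Cs hΛ
  set dM : ℝ := 1 + ∑ i, d i with hdM
  set dI : ℝ := 1 + ∑ i, (d i)⁻¹ with hdI
  have hdMnn : (0:ℝ) ≤ dM :=
    add_nonneg zero_le_one (Finset.sum_nonneg fun i _ => (hd i).le)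
  have hdInn : (0:ℝ) ≤ dI :=
    add_nonneg zero_le_one (Finset.sum_nonneg fun i _ => (inv_pos.mpr (hd i)).le)
  have hdMb : ∀ i, d i ≤ dM := by
    intro i
    have h1 := Finset.single_le_sum (f := fun i => d i)
      (fun j _ => (hd j).le) (Finset.mem_univ i)
    rw [hdM]; linarith
  have hdIb : ∀ i, (d i)⁻¹ ≤ dI := by
    intro i
    have h1 := Finset.single_le_sum (f := fun i => (d i)⁻¹)
      (fun j _ => (inv_pos.mpr (hd j)).le) (Finset.mem_univ i)
    rw [hdI]; linarith
  set c1 : ℝ := (β + dI) / (1 - G) with hc1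
  set c2 : ℝ := G * c1 + β with hc2
  have hc1nn : 0 ≤ c1 := div_nonneg (by linarith) h1g.le
  have hc2nn : 0 ≤ c2 := add_nonneg (mul_nonneg hGnn hc1nn) hβnn
  have hKnn : (0:ℝ) ≤ dM ^ 2 * (c2 ^ 2 + c1 ^ 2) :=
    mul_nonneg (sq_nonneg _) (add_nonneg (sq_nonneg _) (sq_nonneg _))
  refine ⟨Real.sqrt (dM ^ 2 * (c2 ^ 2 + c1 ^ 2)), Real.sqrt_nonneg _, ?_⟩
  intro s v τ
  rw [Real.sq_sqrt hKnn]
  set x := rnnState Λ Win Wout s v with hx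
  set zsig : ℕ → Fin m → ℝ := fun k => Wout.mulVec (x k) with hzsig
  set wsig : ℕ → Fin m → ℝ := fun k => relu (Wout.mulVec (x k) + s k) with hwsig
  set zt : ℕ → Fin m → ℝ := fun k i => zsig k i / d i with hzt
  set st : ℕ → Fin m → ℝ := fun k i => s k i / d i with hst
  set wt : ℕ → Fin m → ℝ := fun k i => wsig k i / d i with hwt
  have hwt_eq : ∀ k i, wt k i = max (zt k i + st k i) 0 := by
    intro k i
    show wsig k i / d i = _
    rw [hwsig]
    show max ((Wout.mulVec (x k) + s k) i) 0 / d i = _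
    rw [Pi.add_apply, ← max_div_div_right (hd i).le, zero_div, add_div]
  have hwtnn : ∀ k i, 0 ≤ wt k i := fun k i => by
    rw [hwt_eq]; exact le_max_right _ _
  set uT : ℕ → Fin m → ℝ := fun k i => if k ≤ τ then wt k i else 0 with huT
  set vT : ℕ → Fin n → ℝ := fun k i => if k ≤ τ then v k i else 0 with hvT
  have huTk : ∀ k, k ≤ τ → uT k = wt k := by
    intro k hk; funext i; simp [huT, hk]
  have hvTk : ∀ k, k ≤ τ → vT k = v k := by
    intro k hk; funext i; simp [hvT, hk]
  have hstate : ∀ k, k ≤ τ + 1 →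
      x k = ltiState Λ Bs uT k + ltiState Λ (1 : Matrix (Fin n) (Fin n) ℝ) vT k := by
    intro k
    induction k with
    | zero =>
        intro _
        show x 0 = _
        rw [hx]
        simp [rnnState, ltiState]
    | succ k ih =>
        intro hk1
        have hkτ : k ≤ τ := by omega
        have ihh := ih (by omega)
        have hx1 : x (k + 1) = Λ.mulVec (x k) + Win.mulVec (wsig k) + v k := rfl
        have hBsu : Bs.mulVec (uT k) = Win.mulVec (wsig k) := by
          have hdiag : (Matrix.diagonal d).mulVec (wt k) = wsig k := by
            funext i
            rw [Matrix.mulVec_diagonal]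
            show d i * (wsig k i / d i) = wsig k i
            rw [mul_comm, div_mul_cancel₀ _ (hd i).ne']
          rw [huTk k hkτ, hBs, ← Matrix.mulVec_mulVec, hdiag]
        show x (k + 1) = ltiState Λ Bs uT (k + 1)
            + ltiState Λ (1 : Matrix (Fin n) (Fin n) ℝ) vT (k + 1)
        rw [hx1, ihh, ltiState, ltiState, hBsu, hvTk k hkτ, Matrix.one_mulVec,
          Matrix.mulVec_add]
        abel
  have hzdec : ∀ k, k ≤ τ → ∀ i, zt k i
      = ltiOutput Λ Bs Cs (0 : Matrix (Fin m) (Fin m) ℝ) uT k i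
        + ltiOutput Λ (1 : Matrix (Fin n) (Fin n) ℝ) Cs (0 : Matrix (Fin m) (Fin n) ℝ) vT k i := by
    intro k hk i
    have hxk := hstate k (by omega)
    simp only [ltiOutput, Matrix.zero_mulVec, add_zero]
    show zsig k i / d i = _
    have hz1 : zsig k i = Wout.mulVec (ltiState Λ Bs uT k) i
        + Wout.mulVec (ltiState Λ (1 : Matrix (Fin n) (Fin n) ℝ) vT k) i := by
      rw [hzsig]
      show Wout.mulVec (x k) i = _
      rw [hxk, Matrix.mulVec_add]
      rfl
    rw [hz1, add_div]
    congr 1 <;>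
      · rw [hCs, ← Matrix.mulVec_mulVec, Matrix.mulVec_diagonal, div_eq_inv_mul]
  set Zq : ℝ := ∑ k ∈ Finset.range (τ + 1), ∑ i, zt k i ^ 2 with hZq
  set Wq : ℝ := ∑ k ∈ Finset.range (τ + 1), ∑ i, wt k i ^ 2 with hWq
  set Sq : ℝ := ∑ k ∈ Finset.range (τ + 1), ∑ i, st k i ^ 2 with hSq
  have hZqnn : 0 ≤ Zq :=
    Finset.sum_nonneg fun _ _ => Finset.sum_nonneg fun _ _ => sq_nonneg _
  have hWqnn : 0 ≤ Wq :=
    Finset.sum_nonneg fun _ _ => Finset.sum_nonneg fun _ _ => sq_nonneg _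
  have hsnn : 0 ≤ trNormSq s τ :=
    Finset.sum_nonneg fun _ _ => Finset.sum_nonneg fun _ _ => sq_nonneg _
  have hvnn : 0 ≤ trNormSq v τ :=
    Finset.sum_nonneg fun _ _ => Finset.sum_nonneg fun _ _ => sq_nonneg _
  have hPnn : 0 ≤ trNormSq s τ + trNormSq v τ := add_nonneg hsnn hvnn
  have hb1 : ∑ k ∈ Finset.range (τ + 1),
      ∑ i, (ltiOutput Λ Bs Cs (0 : Matrix (Fin m) (Fin m) ℝ) uT k i) ^ 2
      ≤ G ^ 2 * Wq := by
    have h := aux_posgain_partial Λ Bs Cs hΛ uT τ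
      (fun k i => by
        rw [huT]
        by_cases hk : k ≤ τ
        · simp only [hk, if_true]; exact hwtnn k i
        · simp [hk])
      (fun k hk => by
        funext i
        rw [huT]
        simp [Nat.not_le.mpr hk]) (τ + 1)
    have heq : ∑ k ∈ Finset.range (τ + 1), ∑ i, uT k i ^ 2 = Wq := by
      rw [hWq]
      refine Finset.sum_congr rfl fun k hk => ?_
      have hkτ : k ≤ τ := by
        have := Finset.mem_range.mp hk; omega
      refine Finset.sum_congr rfl fun i _ => ?_
      rw [huT]; simp [hkτ]
    rw [heq] at h
    rw [hGdef]
    exact h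
  have hb2 : ∑ k ∈ Finset.range (τ + 1),
      ∑ i, (ltiOutput Λ (1 : Matrix (Fin n) (Fin n) ℝ) Cs
        (0 : Matrix (Fin m) (Fin n) ℝ) vT k i) ^ 2
      ≤ β ^ 2 * trNormSq v τ := by
    refine hβ vT (trNormSq v τ) (fun T => ?_) (τ + 1)
    exact aux_trunc_partial_le v τ T
  have hZsplit : Real.sqrt Zq
      ≤ Real.sqrt (∑ k ∈ Finset.range (τ + 1),
          ∑ i, (ltiOutput Λ Bs Cs (0 : Matrix (Fin m) (Fin m) ℝ) uT k i) ^ 2)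
        + Real.sqrt (∑ k ∈ Finset.range (τ + 1),
          ∑ i, (ltiOutput Λ (1 : Matrix (Fin n) (Fin n) ℝ) Cs
            (0 : Matrix (Fin m) (Fin n) ℝ) vT k i) ^ 2) := by
    have hcongr : Zq = ∑ k ∈ Finset.range (τ + 1), ∑ i,
        (ltiOutput Λ Bs Cs (0 : Matrix (Fin m) (Fin m) ℝ) uT k i
          + ltiOutput Λ (1 : Matrix (Fin n) (Fin n) ℝ) Cs
            (0 : Matrix (Fin m) (Fin n) ℝ) vT k i) ^ 2 := by
      rw [hZq]
      refine Finset.sum_congr rfl fun k hk => ?_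
      have hkτ : k ≤ τ := by
        have := Finset.mem_range.mp hk; omega
      exact Finset.sum_congr rfl fun i _ => by rw [hzdec k hkτ i]
    rw [hcongr]
    exact aux_minkowski_double τ _ _
  have hsZ : Real.sqrt Zq ≤ G * Real.sqrt Wq + β * Real.sqrt (trNormSq v τ) := by
    refine hZsplit.trans (add_le_add ?_ ?_)
    · refine (Real.sqrt_le_sqrt hb1).trans (le_of_eq ?_)
      rw [Real.sqrt_mul (sq_nonneg G), Real.sqrt_sq hGnn]
    · refine (Real.sqrt_le_sqrt hb2).trans (le_of_eq ?_)
      rw [Real.sqrt_mul (sq_nonneg β), Real.sqrt_sq hβnn]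
  have hWZ : Real.sqrt Wq ≤ Real.sqrt Zq + Real.sqrt Sq := by
    have hle : Wq ≤ ∑ k ∈ Finset.range (τ + 1), ∑ i, (zt k i + st k i) ^ 2 := by
      rw [hWq]
      refine Finset.sum_le_sum fun k _ => Finset.sum_le_sum fun i _ => ?_
      rw [hwt_eq k i]
      rcases le_or_gt (zt k i + st k i) 0 with h | h
      · rw [max_eq_right h]
        simpa using sq_nonneg (zt k i + st k i)
      · rw [max_eq_left h.le]
    exact (Real.sqrt_le_sqrt hle).trans (aux_minkowski_double τ _ _)
  have hSb : Real.sqrt Sq ≤ dI * Real.sqrt (trNormSq s τ) := by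
    have hle : Sq ≤ dI ^ 2 * trNormSq s τ := by
      rw [hSq, trNormSq, Finset.mul_sum]
      refine Finset.sum_le_sum fun k _ => ?_
      rw [Finset.mul_sum]
      refine Finset.sum_le_sum fun i _ => ?_
      show (s k i / d i) ^ 2 ≤ dI ^ 2 * s k i ^ 2
      rw [div_eq_mul_inv, mul_pow, mul_comm]
      exact mul_le_mul_of_nonneg_right
        (pow_le_pow_left₀ (inv_nonneg.mpr (hd i).le) (hdIb i) 2) (sq_nonneg _)
    refine (Real.sqrt_le_sqrt hle).trans (le_of_eq ?_)
    rw [Real.sqrt_mul (sq_nonneg dI), Real.sqrt_sq hdInn]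
  have hsP1 : Real.sqrt (trNormSq s τ) ≤ Real.sqrt (trNormSq s τ + trNormSq v τ) :=
    Real.sqrt_le_sqrt (le_add_of_nonneg_right hvnn)
  have hsP2 : Real.sqrt (trNormSq v τ) ≤ Real.sqrt (trNormSq s τ + trNormSq v τ) :=
    Real.sqrt_le_sqrt (le_add_of_nonneg_left hsnn)
  set sP : ℝ := Real.sqrt (trNormSq s τ + trNormSq v τ) with hsPdef
  have hW1 : Real.sqrt Wq ≤ c1 * sP := by
    have hA := mul_le_mul_of_nonneg_left hsP2 hβnn
    have hB := mul_le_mul_of_nonneg_left hsP1 hdInn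
    have h2 : (1 - G) * Real.sqrt Wq ≤ (β + dI) * sP := by
      have hexp : (1 - G) * Real.sqrt Wq = Real.sqrt Wq - G * Real.sqrt Wq := by ring
      have hexp2 : (β + dI) * sP = β * sP + dI * sP := by ring
      rw [hexp, hexp2]
      linarith [hWZ, hsZ, hSb, hA, hB]
    calc Real.sqrt Wq = ((1 - G) * Real.sqrt Wq) / (1 - G) := by field_simp
    _ ≤ ((β + dI) * sP) / (1 - G) := (div_le_div_iff_of_pos_right h1g).mpr h2
    _ = c1 * sP := by rw [hc1]; ring
  have hZ1 : Real.sqrt Zq ≤ c2 * sP := by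
    refine hsZ.trans ?_
    have hA := mul_le_mul_of_nonneg_left hW1 hGnn
    have hB := mul_le_mul_of_nonneg_left hsP2 hβnn
    calc G * Real.sqrt Wq + β * Real.sqrt (trNormSq v τ)
        ≤ G * (c1 * sP) + β * sP := add_le_add hA hB
    _ = c2 * sP := by rw [hc2]; ring
  have hz2 : trNormSq zsig τ ≤ dM ^ 2 * Zq := by
    rw [trNormSq, hZq, Finset.mul_sum]
    refine Finset.sum_le_sum fun k _ => ?_
    rw [Finset.mul_sum]
    refine Finset.sum_le_sum fun i _ => ?_
    have he : zsig k i = d i * zt k i := by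
      show zsig k i = d i * (zsig k i / d i)
      rw [mul_comm, div_mul_cancel₀ _ (hd i).ne']
    rw [he, mul_pow]
    exact mul_le_mul_of_nonneg_right
      (pow_le_pow_left₀ (hd i).le (hdMb i) 2) (sq_nonneg _)
  have hw2 : trNormSq wsig τ ≤ dM ^ 2 * Wq := by
    rw [trNormSq, hWq, Finset.mul_sum]
    refine Finset.sum_le_sum fun k _ => ?_
    rw [Finset.mul_sum]
    refine Finset.sum_le_sum fun i _ => ?_
    have he : wsig k i = d i * wt k i := by
      show wsig k i = d i * (wsig k i / d i)
      rw [mul_comm, div_mul_cancel₀ _ (hd i).ne']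
    rw [he, mul_pow]
    exact mul_le_mul_of_nonneg_right
      (pow_le_pow_left₀ (hd i).le (hdMb i) 2) (sq_nonneg _)
  have hZfin : Zq ≤ c2 ^ 2 * (trNormSq s τ + trNormSq v τ) := by
    have h := aux_sq_le_of_sqrt_le hZqnn hZ1
    rwa [mul_pow, hsPdef, Real.sq_sqrt hPnn] at h
  have hWfin : Wq ≤ c1 ^ 2 * (trNormSq s τ + trNormSq v τ) := by
    have h := aux_sq_le_of_sqrt_le hWqnn hW1
    rwa [mul_pow, hsPdef, Real.sq_sqrt hPnn] at h
  calc trNormSq zsig τ + trNormSq wsig τ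
      ≤ dM ^ 2 * Zq + dM ^ 2 * Wq := add_le_add hz2 hw2
  _ ≤ dM ^ 2 * (c2 ^ 2 * (trNormSq s τ + trNormSq v τ))
      + dM ^ 2 * (c1 ^ 2 * (trNormSq s τ + trNormSq v τ)) :=
      add_le_add (mul_le_mul_of_nonneg_left hZfin (sq_nonneg _))
        (mul_le_mul_of_nonneg_left hWfin (sq_nonneg _))
  _ = dM ^ 2 * (c2 ^ 2 + c1 ^ 2) * (trNormSq s τ + trNormSq v τ) := by ring


end
end

section
/- Let Λ ∈ ℝ^{n×n}, W_in ∈ ℝ^{n×m}, W_out ∈ ℝ^{m×n}. The following are equivalent: (i) there exist a positive semidefinite P ∈ ℝ^{n×n}, a diagonal D ∈ ℝ^{m×m} with strictly positive diagonal entries, and a copositive Q ∈ ℝ^{m×m} such that L(Λ, W_in D, D^{-1} W_out, 0, P, Q, 1) ≺ 0; (ii) there exist a positive semidefinite P ∈ ℝ^{n×n}, a diagonal S ∈ ℝ^{m×m} with strictly positive diagonal entries, and a copositive Q' ∈ ℝ^{m×m} such that [[−P, 0],[0, −S + Q']] + [Λ, W_in; W_out, 0]ᵀ [P, 0; 0,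 S] [Λ, W_in; W_out, 0] ≺ 0. -/
open Matrix

noncomputable section

section AuxStmt18

lemma posdef_congr {k : Type*} [Fintype k] [DecidableEq k]
    {M T Ti : Matrix k k ℝ} (h : T * Ti = 1) (hM : M.PosDef) :
    (Tᵀ * M * T).PosDef := by
  have hTi : Ti * T = 1 := mul_eq_one_comm.mp h
  rw [Matrix.posDef_iff_dotProduct_mulVec]
  constructor
  · have := Matrix.isHermitian_conjTranspose_mul_mul T hM.1
    rwa [Matrix.conjTranspose_eq_transpose_of_trivial] at this
  · intro x hx
    have hTx : T *ᵥ x ≠ 0 := by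
      intro h0
      apply hx
      have hxeq : x = Ti *ᵥ (T *ᵥ x) := by
        rw [Matrix.mulVec_mulVec, hTi, Matrix.one_mulVec]
      rw [hxeq, h0, Matrix.mulVec_zero]
    have key : star x ⬝ᵥ (Tᵀ * M * T) *ᵥ x = star (T *ᵥ x) ⬝ᵥ M *ᵥ (T *ᵥ x) := by
      simp only [star_trivial]
      rw [← Matrix.mulVec_mulVec, ← Matrix.mulVec_mulVec, Matrix.dotProduct_mulVec,
        Matrix.vecMul_transpose]
    rw [key]
    exact hM.dotProduct_mulVec_pos hTx

lemma posdef_congr_iff {k : Type*} [Fintype k] [DecidableEq k]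
    {M T Ti : Matrix k k ℝ} (h : T * Ti = 1) :
    (Tᵀ * M * T).PosDef ↔ M.PosDef := by
  refine ⟨fun hp => ?_, posdef_congr h⟩
  have := posdef_congr (mul_eq_one_comm.mp h) hp
  have e1 : Tiᵀ * (Tᵀ * M * T) * Ti = (T * Ti)ᵀ * M * (T * Ti) := by
    rw [Matrix.transpose_mul]; noncomm_ring
  rwa [e1, h, Matrix.transpose_one, Matrix.one_mul, Matrix.mul_one] at this

lemma copositive_diag_congr {m : ℕ} {Q : Matrix (Fin m) (Fin m) ℝ} (hQ : Copositive Q)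
    {e : Fin m → ℝ} (he : ∀ i, 0 ≤ e i) :
    Copositive (Matrix.diagonal e * Q * Matrix.diagonal e) := by
  constructor
  · rw [Matrix.IsSymm, Matrix.transpose_mul, Matrix.transpose_mul, Matrix.diagonal_transpose,
      hQ.1, Matrix.mul_assoc]
  · intro x hx
    have key : x ⬝ᵥ (Matrix.diagonal e * Q * Matrix.diagonal e) *ᵥ x
        = (Matrix.diagonal e *ᵥ x) ⬝ᵥ Q *ᵥ (Matrix.diagonal e *ᵥ x) := by
      rw [← Matrix.mulVec_mulVec, ← Matrix.mulVec_mulVec, Matrix.dotProduct_mulVec]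
      congr 1
      rw [← Matrix.diagonal_transpose e, Matrix.vecMul_transpose]
      rw [Matrix.diagonal_transpose]
    rw [key]
    exact hQ.2 _ (fun i => by
      simpa [Matrix.mulVec_diagonal] using mul_nonneg (he i) (hx i))

lemma key_identity {n m : ℕ} (Λ : Matrix (Fin n) (Fin n) ℝ)
    (Win : Matrix (Fin n) (Fin m) ℝ) (Wout : Matrix (Fin m) (Fin n) ℝ)
    (P : Matrix (Fin n) (Fin n) ℝ) (Q : Matrix (Fin m) (Fin m) ℝ)
    (d e : Fin m → ℝ) (hde : ∀ i, d i * e i = 1) :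
    (Matrix.fromBlocks (1 : Matrix (Fin n) (Fin n) ℝ) 0 0 (Matrix.diagonal e))ᵀ
      * (Lmat Λ (Win * Matrix.diagonal d) (Matrix.diagonal e * Wout)
          (0 : Matrix (Fin m) (Fin m) ℝ) P Q 1)
      * Matrix.fromBlocks 1 0 0 (Matrix.diagonal e)
    = Matrix.fromBlocks (-P) 0 0
        (-(Matrix.diagonal fun i => e i ^ 2) + Matrix.diagonal e * Q * Matrix.diagonal e)
      + (Matrix.fromBlocks Λ Win Wout (0 : Matrix (Fin m) (Fin m) ℝ))ᵀ
        * Matrix.fromBlocks P 0 0 (Matrix.diagonal fun i => e i ^ 2)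
        * Matrix.fromBlocks Λ Win Wout (0 : Matrix (Fin m) (Fin m) ℝ) := by
  have hde1 : Matrix.diagonal d * Matrix.diagonal e = 1 := by
    simp [Matrix.diagonal_mul_diagonal, hde]
  have hee : Matrix.diagonal e * Matrix.diagonal e = Matrix.diagonal fun i => e i ^ 2 := by
    rw [Matrix.diagonal_mul_diagonal]
    simp [sq]
  have hed1 : Matrix.diagonal e * Matrix.diagonal d = 1 := by
    simp [Matrix.diagonal_mul_diagonal, fun i => mul_comm (e i) (d i), hde]
  unfold Lmat
  simp only [Matrix.fromBlocks_transpose, Matrix.fromBlocks_multiply, Matrix.fromBlocks_add,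
    Matrix.transpose_zero, Matrix.transpose_one, Matrix.diagonal_transpose,
    Matrix.mul_zero, Matrix.zero_mul, Matrix.mul_one, Matrix.one_mul,
    add_zero, zero_add, neg_zero, one_pow, neg_smul, one_smul, Matrix.transpose_mul,
    Matrix.add_mul, Matrix.mul_add, Matrix.neg_mul, Matrix.mul_neg]
  rw [Matrix.fromBlocks_inj]
  refine ⟨?_, ?_, ?_, ?_⟩
  · simp only [Matrix.mul_assoc]
    rw [← Matrix.mul_assoc (Matrix.diagonal e) (Matrix.diagonal e) Wout, hee]
  · simp only [Matrix.mul_assoc]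
    rw [hde1, Matrix.mul_one]
  · simp only [Matrix.mul_assoc]
    rw [← Matrix.mul_assoc (Matrix.diagonal e) (Matrix.diagonal d), hed1, Matrix.one_mul]
  · simp only [Matrix.mul_assoc, Matrix.mul_one, Matrix.one_mul]
    rw [hee, hde1, Matrix.mul_one, ← Matrix.mul_assoc (Matrix.diagonal e) (Matrix.diagonal d),
      hed1, Matrix.one_mul]

end AuxStmt18

/-- equivalence of the scaled small-gain LMI with diagonal scaling D and
its convexified form with S a positive diagonal matrix. -/
theorem stmt_18 (n m : ℕ) (Λ : Matrix (Fin n) (Fin n) ℝ)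
    (Win : Matrix (Fin n) (Fin m) ℝ) (Wout : Matrix (Fin m) (Fin n) ℝ) :
    (∃ (P : Matrix (Fin n) (Fin n) ℝ) (d : Fin m → ℝ) (Q : Matrix (Fin m) (Fin m) ℝ),
      P.PosSemidef ∧ (∀ i, 0 < d i) ∧ Copositive Q ∧
      (-(Lmat Λ (Win * Matrix.diagonal d)
          ((Matrix.diagonal fun i => (d i)⁻¹) * Wout)
          (0 : Matrix (Fin m) (Fin m) ℝ) P Q 1)).PosDef) ↔
    (∃ (P : Matrix (Fin n) (Fin n) ℝ) (s : Fin m → ℝ) (Q' : Matrix (Fin m) (Fin m) ℝ),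
      P.PosSemidef ∧ (∀ i, 0 < s i) ∧ Copositive Q' ∧
      (-(Matrix.fromBlocks (-P) 0 0 (-(Matrix.diagonal s) + Q')
          + (Matrix.fromBlocks Λ Win Wout (0 : Matrix (Fin m) (Fin m) ℝ))ᵀ
            * Matrix.fromBlocks P 0 0 (Matrix.diagonal s)
            * Matrix.fromBlocks Λ Win Wout (0 : Matrix (Fin m) (Fin m) ℝ))).PosDef) := by
  constructor
  · rintro ⟨P, d, Q, hP, hd, hQ, hpd⟩
    have hdne : ∀ i, d i ≠ 0 := fun i => (hd i).ne'
    refine ⟨P, fun i => (d i)⁻¹ ^ 2,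
      Matrix.diagonal (fun i => (d i)⁻¹) * Q * Matrix.diagonal (fun i => (d i)⁻¹), hP,
      fun i => pow_pos (inv_pos.mpr (hd i)) 2,
      copositive_diag_congr hQ (fun i => (inv_pos.mpr (hd i)).le), ?_⟩
    have hTTi : (Matrix.fromBlocks (1 : Matrix (Fin n) (Fin n) ℝ) 0 0
          (Matrix.diagonal fun i => (d i)⁻¹))
        * Matrix.fromBlocks 1 0 0 (Matrix.diagonal d) = 1 := by
      rw [← Matrix.fromBlocks_one]
      simp [Matrix.fromBlocks_multiply, Matrix.diagonal_mul_diagonal,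
        fun i => inv_mul_cancel₀ (hdne i)]
    have hkey := key_identity Λ Win Wout P Q d (fun i => (d i)⁻¹)
      (fun i => mul_inv_cancel₀ (hdne i))
    have hcon := posdef_congr hTTi hpd
    rw [Matrix.mul_neg, Matrix.neg_mul, hkey] at hcon
    exact hcon
  · rintro ⟨P, s, Q', hP, hs, hQ', hpd⟩
    set d : Fin m → ℝ := fun i => (Real.sqrt (s i))⁻¹ with hdef
    have hd : ∀ i, 0 < d i := fun i => by
      simp only [hdef]
      exact inv_pos.mpr (Real.sqrt_pos.mpr (hs i))
    have hdne : ∀ i, d i ≠ 0 := fun i => (hd i).ne'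
    refine ⟨P, d, Matrix.diagonal d * Q' * Matrix.diagonal d, hP, hd,
      copositive_diag_congr hQ' (fun i => (hd i).le), ?_⟩
    have hTTi : (Matrix.fromBlocks (1 : Matrix (Fin n) (Fin n) ℝ) 0 0
          (Matrix.diagonal fun i => (d i)⁻¹))
        * Matrix.fromBlocks 1 0 0 (Matrix.diagonal d) = 1 := by
      rw [← Matrix.fromBlocks_one]
      simp [Matrix.fromBlocks_multiply, Matrix.diagonal_mul_diagonal,
        fun i => inv_mul_cancel₀ (hdne i)]
    have hkey := key_identity Λ Win Wout P (Matrix.diagonal d * Q' * Matrix.diagonal d) d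
      (fun i => (d i)⁻¹) (fun i => mul_inv_cancel₀ (hdne i))
    have hs' : (fun i => ((d i)⁻¹) ^ 2) = s := by
      funext i
      simp only [hdef, inv_inv]
      exact Real.sq_sqrt (hs i).le
    have hed1 : (Matrix.diagonal fun i => (d i)⁻¹ : Matrix (Fin m) (Fin m) ℝ)
        * Matrix.diagonal d = 1 := by
      simp [Matrix.diagonal_mul_diagonal, fun i => inv_mul_cancel₀ (hdne i)]
    have hde1 : Matrix.diagonal d * (Matrix.diagonal fun i => (d i)⁻¹ :
        Matrix (Fin m) (Fin m) ℝ) = 1 := by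
      simp [Matrix.diagonal_mul_diagonal, fun i => mul_inv_cancel₀ (hdne i)]
    have hQeq : (Matrix.diagonal fun i => (d i)⁻¹)
        * (Matrix.diagonal d * Q' * Matrix.diagonal d)
        * (Matrix.diagonal fun i => (d i)⁻¹) = Q' := by
      simp only [← Matrix.mul_assoc]
      rw [hed1, Matrix.one_mul, Matrix.mul_assoc, hde1, Matrix.mul_one]
    rw [hs', hQeq] at hkey
    rw [← posdef_congr_iff hTTi, Matrix.mul_neg, Matrix.neg_mul, hkey]
    exact hpd


end
end
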